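/- arXiv:1102.3682 — 3 statements merged into one kernel-verified Lean document; each statement's English description precedes it below -/
import Mathlib

section
/- For the nearest-neighbour model on ℤ^d in every dimension d ≥ 1 and every n ≥ 0, the number of lattice animals satisfies a_n(d) ≤ (2d)^n (n+1)^{n−1}/n!. -/
open Filter

/-- Vertices of the `d`-dimensional integer lattice `ℤ^d`. -/
abbrev Vtx (d : ℕ) := Fin d → ℤ

/-- The nearest-neighbour graph on `ℤ^d`: `x ~ y` iff `‖x - y‖₁ = 1`. -/
def nnGraph (d : ℕ) : SimpleGraph (Vtx d) where
  Adj x y := (∑ i, |x i - y i|) = 1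
  symm := by
    constructor
    intro x y h
    have e : ∀ i, |y i - x i| = |x i - y i| := fun i => abs_sub_comm _ _
    simpa only [e] using h
  loopless := by constructor; intro x h; simp at h

/-- The spread-out graph on `ℤ^d`: `x ~ y` iff `0 < ‖x - y‖_∞ ≤ L`. -/
def spreadGraph (d L : ℕ) : SimpleGraph (Vtx d) where
  Adj x y := x ≠ y ∧ ∀ i, |x i - y i| ≤ (L : ℤ)
  symm := by
    constructor
    rintro x y ⟨h1, h2⟩
    exact ⟨h1.symm, fun i => by rw [abs_sub_comm]; exact h2 i⟩
  loopless := by constructor; rintro x ⟨h, -⟩; exact h rfl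

/-- The graph on `ℤ^d` determined by a finite set of bonds. -/
def bondGraph (d : ℕ) (E : Finset (Sym2 (Vtx d))) : SimpleGraph (Vtx d) :=
  SimpleGraph.fromEdgeSet (E : Set (Sym2 (Vtx d)))

/-- `E` is the bond set of a lattice animal (finite connected subgraph of `G`)
whose vertex set contains the origin.  (When `E = ∅`, the animal is the single
vertex at the origin.) -/
def IsLatticeAnimal (d : ℕ) (G : SimpleGraph (Vtx d)) (E : Finset (Sym2 (Vtx d))) : Prop :=
  (E : Set (Sym2 (Vtx d))) ⊆ G.edgeSet ∧
  (bondGraph d E).support.Pairwise (bondGraph d E).Reachable ∧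
  (E.Nonempty → (0 : Vtx d) ∈ (bondGraph d E).support)

/-- `E` is the bond set of a lattice tree (finite connected subgraph of `G` containing
no cycles) whose vertex set contains the origin. -/
def IsLatticeTree (d : ℕ) (G : SimpleGraph (Vtx d)) (E : Finset (Sym2 (Vtx d))) : Prop :=
  IsLatticeAnimal d G E ∧ (bondGraph d E).IsAcyclic

/-- `a_n`: the number of `n`-bond lattice animals in `G` containing the origin. -/
noncomputable def animalCount (d : ℕ) (G : SimpleGraph (Vtx d)) (n : ℕ) : ℕ :=
  Set.ncard {E : Finset (Sym2 (Vtx d)) | E.card = n ∧ IsLatticeAnimal d G E}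

/-- `t_n`: the number of `n`-bond lattice trees in `G` containing the origin. -/
noncomputable def treeCount (d : ℕ) (G : SimpleGraph (Vtx d)) (n : ℕ) : ℕ :=
  Set.ncard {E : Finset (Sym2 (Vtx d)) | E.card = n ∧ IsLatticeTree d G E}


namespace AnimalProof


variable {n : ℕ}

/-- `p` is a tree rooted at `0` (as a parent map). -/
def IsPTree (p : Fin (n+1) → Fin (n+1)) : Prop :=
  p 0 = 0 ∧ ∀ v, ∃ k, p^[k] v = 0

/-- the set of current leaves -/
def leafSet (S : Finset (Fin (n+1))) (p : Fin (n+1) → Fin (n+1)) : Finset (Fin (n+1)) :=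
  S.filter (fun v => v ≠ 0 ∧ ∀ w ∈ S, w ≠ v → p w ≠ v)

/-- the largest current leaf -/
def maxLeaf (S : Finset (Fin (n+1))) (p : Fin (n+1) → Fin (n+1)) : Fin (n+1) :=
  WithBot.unbotD 0 (leafSet S p).max

variable {S : Finset (Fin (n+1))} {p q : Fin (n+1) → Fin (n+1)} {v : Fin (n+1)}

lemma maxLeaf_mem (h : (leafSet S p).Nonempty) : maxLeaf S p ∈ leafSet S p := by
  obtain ⟨a, ha⟩ := Finset.max_of_nonempty h
  rw [maxLeaf, ha]; exact Finset.mem_of_max ha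

lemma le_maxLeaf (hv : v ∈ leafSet S p) : v ≤ maxLeaf S p := by
  obtain ⟨a, ha⟩ := Finset.max_of_nonempty ⟨v, hv⟩
  rw [maxLeaf, ha]; exact Finset.le_max_of_eq hv ha

/-- Prüfer code: delete the largest leaf `k` times, recording parents. -/
def code : ℕ → Finset (Fin (n+1)) → (Fin (n+1) → Fin (n+1)) → List (Fin (n+1))
  | 0, _, _ => []
  | k+1, S, p => p (maxLeaf S p) :: code k (S.erase (maxLeaf S p)) p

/-- invariant of the deletion process -/
def Good (S : Finset (Fin (n+1))) (p : Fin (n+1) → Fin (n+1)) : Prop :=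
  0 ∈ S ∧ ∀ v ∈ S, v ≠ 0 → p v ∈ S

lemma IsPTree.ne_self (hp : IsPTree p) (hv : v ≠ 0) : p v ≠ v := by
  intro h
  obtain ⟨k, hk⟩ := hp.2 v
  have : ∀ m, p^[m] v = v := by
    intro m; induction m with
    | zero => rfl
    | succ m ih => rw [Function.iterate_succ_apply, h, ih]
  exact hv ((this k).symm.trans hk)

/-- the depth of a vertex: distance to the root -/
noncomputable def depth (hp : IsPTree p) (v : Fin (n+1)) : ℕ := Nat.find (hp.2 v)

lemma depth_lt (hp : IsPTree p) {w : Fin (n+1)} (hw : w ≠ 0) :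
    depth hp (p w) < depth hp w := by
  have hspec : p^[depth hp w] w = 0 := Nat.find_spec (hp.2 w)
  have h1 : depth hp w ≠ 0 := by
    intro h; rw [h] at hspec; simp at hspec; exact hw hspec
  obtain ⟨m, hm⟩ := Nat.exists_eq_succ_of_ne_zero h1
  rw [hm, Function.iterate_succ_apply] at hspec
  have h2 : depth hp (p w) ≤ m := Nat.find_le hspec
  omega

lemma exists_leaf (hp : IsPTree p) (hS : Good S p) (hv : v ∈ S) (hv0 : v ≠ 0) :
    (leafSet S p).Nonempty := by
  classical
  obtain ⟨x, hxmem, hxmax⟩ := Finset.exists_max_image (S.filter (fun v => v ≠ 0))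
    (depth hp) ⟨v, Finset.mem_filter.2 ⟨hv, hv0⟩⟩
  rw [Finset.mem_filter] at hxmem
  refine ⟨x, Finset.mem_filter.2 ⟨hxmem.1, hxmem.2, ?_⟩⟩
  intro w hw hwx hpw
  have hw0 : w ≠ 0 := by
    intro h; rw [h, hp.1] at hpw; exact hxmem.2 hpw.symm
  have := hxmax w (Finset.mem_filter.2 ⟨hw, hw0⟩)
  have hd := depth_lt hp hw0
  rw [hpw] at hd; omega

lemma good_erase (hp : IsPTree p) (hS : Good S p) (h : (leafSet S p).Nonempty) :
    Good (S.erase (maxLeaf S p)) p := by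
  have hm := maxLeaf_mem h
  rw [leafSet, Finset.mem_filter] at hm
  constructor
  · exact Finset.mem_erase.2 ⟨fun h0 => hm.2.1 h0.symm, hS.1⟩
  · intro v hvmem hv0
    rw [Finset.mem_erase] at hvmem
    refine Finset.mem_erase.2 ⟨?_, hS.2 v hvmem.2 hv0⟩
    exact hm.2.2 v hvmem.2 hvmem.1

lemma maxLeaf_spec (h : (leafSet S p).Nonempty) :
    maxLeaf S p ∈ S ∧ maxLeaf S p ≠ 0 ∧ ∀ w ∈ S, w ≠ maxLeaf S p → p w ≠ maxLeaf S p := by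
  have := maxLeaf_mem h
  rw [leafSet, Finset.mem_filter] at this
  exact ⟨this.1, this.2.1, this.2.2⟩

lemma card_ge2 (hS : Good S p) (hcard : 2 ≤ S.card) : ∃ v ∈ S, v ≠ 0 :=
  Finset.exists_mem_ne (by omega) 0

lemma code_mem_subset (hp : IsPTree p) :
    ∀ k S, Good S p → S.card = k + 1 → ∀ x ∈ code k S p, x ∈ S := by
  intro k
  induction k with
  | zero => intro S _ _ x hx; simp [code] at hx
  | succ k ih =>
    intro S hS hcard x hx
    obtain ⟨v, hv, hv0⟩ := card_ge2 hS (by omega)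
    have hne := exists_leaf hp hS hv hv0
    have hm := maxLeaf_spec hne
    rw [code, List.mem_cons] at hx
    rcases hx with h | h
    · rw [h]; exact hS.2 _ hm.1 hm.2.1
    · have hg := good_erase hp hS hne
      have hc : (S.erase (maxLeaf S p)).card = k + 1 := by
        have := Finset.card_erase_of_mem hm.1; omega
      exact Finset.mem_of_mem_erase (ih _ hg hc x h)

lemma leaf_iff_not_mem_code (hp : IsPTree p) :
    ∀ k S, Good S p → S.card = k + 1 → ∀ v ∈ S, v ≠ 0 →
      (v ∈ leafSet S p ↔ v ∉ code k S p) := by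
  intro k
  induction k with
  | zero =>
    intro S hS hcard v hv hv0
    exfalso
    obtain ⟨a, ha⟩ := Finset.card_eq_one.1 hcard
    rw [ha, Finset.mem_singleton] at hv
    have := hS.1; rw [ha, Finset.mem_singleton] at this
    exact hv0 (hv.trans this.symm)
  | succ k ih =>
    intro S hS hcard v hv hv0
    obtain ⟨w, hw, hw0⟩ := card_ge2 hS (by omega)
    have hne := exists_leaf hp hS hw hw0
    have hm := maxLeaf_spec hne
    have hg := good_erase hp hS hne
    have hc : (S.erase (maxLeaf S p)).card = k + 1 := by
      have := Finset.card_erase_of_mem hm.1; omega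
    set L := maxLeaf S p with hL
    rw [code]
    by_cases hvL : v = L
    · subst hvL
      constructor
      · intro _ hmem
        rw [List.mem_cons] at hmem
        rcases hmem with h | h
        · exact hp.ne_self hv0 h.symm
        · have := code_mem_subset hp k _ hg hc _ h
          exact (Finset.mem_erase.1 this).1 rfl
      · intro _; exact maxLeaf_mem hne
    · have hvS' : v ∈ S.erase L := Finset.mem_erase.2 ⟨hvL, hv⟩
      have hIH := ih _ hg hc v hvS' hv0
      constructor
      · intro hleaf hmem
        rw [leafSet, Finset.mem_filter] at hleaf
        rw [List.mem_cons] at hmem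
        rcases hmem with h | h
        · exact hleaf.2.2 L hm.1 (fun hh => hvL hh.symm) h.symm
        · have hleaf' : v ∈ leafSet (S.erase L) p := by
            rw [leafSet, Finset.mem_filter]
            exact ⟨hvS', hv0, fun w hwm hwv => hleaf.2.2 w (Finset.mem_of_mem_erase hwm) hwv⟩
          exact (hIH.1 hleaf') h
      · intro hnmem
        have h1 : p L ≠ v := by
          intro h; exact hnmem (by rw [List.mem_cons]; exact Or.inl h.symm)
        have h2 : v ∉ code k (S.erase L) p := by
          intro h; exact hnmem (by rw [List.mem_cons]; exact Or.inr h)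
        have hleaf' := hIH.2 h2
        rw [leafSet, Finset.mem_filter] at hleaf' ⊢
        refine ⟨hv, hv0, fun w hwm hwv => ?_⟩
        by_cases hwL : w = L
        · subst hwL; exact h1
        · exact hleaf'.2.2 w (Finset.mem_erase.2 ⟨hwL, hwm⟩) hwv

lemma code_inj_aux (hp : IsPTree p) (hq : IsPTree q) :
    ∀ k S, Good S p → Good S q → S.card = k + 1 →
      code k S p = code k S q → ∀ v ∈ S, p v = q v := by
  intro k
  induction k with
  | zero =>
    intro S hSp hSq hcard _ v hv
    obtain ⟨a, ha⟩ := Finset.card_eq_one.1 hcard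
    have h0 := hSp.1; rw [ha, Finset.mem_singleton] at h0
    rw [ha, Finset.mem_singleton] at hv
    rw [hv, ← h0, hp.1, hq.1]
  | succ k ih =>
    intro S hSp hSq hcard hcode v hv
    obtain ⟨w, hw, hw0⟩ := card_ge2 hSp (by omega)
    have hnep := exists_leaf hp hSp hw hw0
    have hneq := exists_leaf hq hSq hw hw0
    have hmp := maxLeaf_spec hnep
    have hmq := maxLeaf_spec hneq
    have hLpq : maxLeaf S p = maxLeaf S q := by
      have h1 : maxLeaf S p ∈ leafSet S q := by
        have hnot : maxLeaf S p ∉ code (k+1) S p :=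
          (leaf_iff_not_mem_code hp (k+1) S hSp hcard _ hmp.1 hmp.2.1).1 (maxLeaf_mem hnep)
        rw [hcode] at hnot
        exact (leaf_iff_not_mem_code hq (k+1) S hSq hcard _ hmp.1 hmp.2.1).2 hnot
      have h2 : maxLeaf S q ∈ leafSet S p := by
        have hnot : maxLeaf S q ∉ code (k+1) S q :=
          (leaf_iff_not_mem_code hq (k+1) S hSq hcard _ hmq.1 hmq.2.1).1 (maxLeaf_mem hneq)
        rw [← hcode] at hnot
        exact (leaf_iff_not_mem_code hp (k+1) S hSp hcard _ hmq.1 hmq.2.1).2 hnot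
      exact le_antisymm (le_maxLeaf h1) (le_maxLeaf h2)
    rw [code, code, ← hLpq] at hcode
    set L := maxLeaf S p with hL
    injection hcode with hhead htail
    have hgp := good_erase hp hSp hnep
    have hgq : Good (S.erase L) q := by rw [hLpq]; exact good_erase hq hSq hneq
    have hc : (S.erase L).card = k + 1 := by have := Finset.card_erase_of_mem hmp.1; omega
    by_cases hvL : v = L
    · rw [hvL]; exact hhead
    · exact ih _ hgp hgq hc htail v (Finset.mem_erase.2 ⟨hvL, hv⟩)

lemma code_length : ∀ (k : ℕ) (S : Finset (Fin (n+1))), (code k S p).length = k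
  | 0, _ => rfl
  | k+1, S => by rw [code, List.length_cons, code_length k]

lemma code_last (hp : IsPTree p) :
    ∀ k S, Good S p → S.card = k + 2 →
      ∃ l : List (Fin (n+1)), code (k+1) S p = l ++ [0] ∧ l.length = k := by
  intro k
  induction k with
  | zero =>
    intro S hS hcard
    obtain ⟨w, hw, hw0⟩ := card_ge2 hS (by omega)
    have hne := exists_leaf hp hS hw hw0
    have hm := maxLeaf_spec hne
    refine ⟨[], ?_, rfl⟩
    have h1 : (S.erase (maxLeaf S p)).card = 1 := by
      have := Finset.card_erase_of_mem hm.1; omega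
    obtain ⟨a, ha⟩ := Finset.card_eq_one.1 h1
    have h0 : (0 : Fin (n+1)) ∈ S.erase (maxLeaf S p) := (good_erase hp hS hne).1
    rw [ha, Finset.mem_singleton] at h0
    have hpL : p (maxLeaf S p) ∈ S.erase (maxLeaf S p) :=
      Finset.mem_erase.2 ⟨hp.ne_self hm.2.1, hS.2 _ hm.1 hm.2.1⟩
    rw [ha, Finset.mem_singleton, ← h0] at hpL
    simp [code, hpL]
  | succ k ih =>
    intro S hS hcard
    obtain ⟨w, hw, hw0⟩ := card_ge2 hS (by omega)
    have hne := exists_leaf hp hS hw hw0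
    have hm := maxLeaf_spec hne
    have hc : (S.erase (maxLeaf S p)).card = k + 2 := by
      have := Finset.card_erase_of_mem hm.1; omega
    obtain ⟨l, hl, hll⟩ := ih _ (good_erase hp hS hne) hc
    exact ⟨p (maxLeaf S p) :: l, by rw [code, hl]; rfl, by simp [hll]⟩

lemma good_univ (hp : IsPTree p) : Good (Finset.univ : Finset (Fin (n+1))) p :=
  ⟨Finset.mem_univ _, fun v _ _ => Finset.mem_univ _⟩

/-- final Prüfer injectivity statement -/
lemma pruefer_inj (hn : 1 ≤ n) (hp : IsPTree p) (hq : IsPTree q)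
    (h : ∀ t : Fin (n-1), (code n Finset.univ p).getD t 0 = (code n Finset.univ q).getD t 0) :
    p = q := by
  obtain ⟨m, hm⟩ := Nat.exists_eq_succ_of_ne_zero (Nat.one_le_iff_ne_zero.1 hn)
  subst hm
  have hcard2 : (Finset.univ : Finset (Fin (m+1+1))).card = m + 2 := by
    simp
  obtain ⟨lp, hlp, hlpl⟩ := code_last hp m Finset.univ (good_univ hp) hcard2
  obtain ⟨lq, hlq, hlql⟩ := code_last hq m Finset.univ (good_univ hq) hcard2
  have hlpq : lp = lq := by
    apply List.ext_getElem (by rw [hlpl, hlql])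
    intro i h1 h2
    have hi : i < m := hlpl ▸ h1
    have hfin : i < m.succ - 1 := by omega
    have hgd := h ⟨i, hfin⟩
    have e1 : lp[i] = (code (m+1) (Finset.univ : Finset (Fin (m+1+1))) p).getD i 0 := by
      rw [hlp, List.getD_eq_getElem _ _ (by simp [hlpl]; omega)]
      exact (List.getElem_append_left h1).symm
    have e2 : lq[i] = (code (m+1) (Finset.univ : Finset (Fin (m+1+1))) q).getD i 0 := by
      rw [hlq, List.getD_eq_getElem _ _ (by simp [hlql]; omega)]
      exact (List.getElem_append_left h2).symm
    rw [e1, e2]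
    exact hgd
  have hcodes : code (m+1) Finset.univ p = code (m+1) Finset.univ q := by
    rw [hlp, hlq, hlpq]
  have := code_inj_aux hp hq (m+1) Finset.univ (good_univ hp) (good_univ hq) (by simp) hcodes
  exact funext fun v => this v (Finset.mem_univ v)



variable {d : ℕ}

/-- key: pair of (distance to origin, lexicographic position) with lex order -/
noncomputable def kappa (E : Finset (Sym2 (Vtx d))) (v : Vtx d) : ℕ ×ₗ List ℤ :=
  toLex ((bondGraph d E).dist 0 v, List.ofFn v)

lemma kappa_injective (E : Finset (Sym2 (Vtx d))) : Function.Injective (kappa E) := by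
  intro u v h
  have h2 := congrArg (fun x => (ofLex x).2) h
  exact funext (congrFun (List.ofFn_injective h2))

lemma kappa_lt_of_dist_lt {E : Finset (Sym2 (Vtx d))} {u v : Vtx d}
    (h : (bondGraph d E).dist 0 u < (bondGraph d E).dist 0 v) : kappa E u < kappa E v := by
  rw [kappa, kappa, Prod.Lex.lt_iff]; exact Or.inl h

lemma kappa_le_dist {E : Finset (Sym2 (Vtx d))} {u v : Vtx d} (h : kappa E u < kappa E v) :
    (bondGraph d E).dist 0 u ≤ (bondGraph d E).dist 0 v := by
  rw [kappa, kappa, Prod.Lex.lt_iff] at h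
  rcases h with h | ⟨h, _⟩
  · exact le_of_lt h
  · exact le_of_eq h

open Classical in
/-- the two endpoints of an edge, ordered by `kappa` -/
noncomputable def ends (E : Finset (Sym2 (Vtx d))) (e : Sym2 (Vtx d)) : Vtx d × Vtx d :=
  if h : ∃ z : Vtx d × Vtx d, e = s(z.1, z.2) ∧ kappa E z.1 < kappa E z.2 then h.choose
  else (0, 0)

noncomputable def anchor (E : Finset (Sym2 (Vtx d))) (e : Sym2 (Vtx d)) : Vtx d := (ends E e).1
noncomputable def far (E : Finset (Sym2 (Vtx d))) (e : Sym2 (Vtx d)) : Vtx d := (ends E e).2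

lemma exists_ends {E : Finset (Sym2 (Vtx d))} {e : Sym2 (Vtx d)} (hnd : ¬ e.IsDiag) :
    ∃ z : Vtx d × Vtx d, e = s(z.1, z.2) ∧ kappa E z.1 < kappa E z.2 := by
  induction e using Sym2.ind with
  | _ x y =>
    rw [Sym2.mk_isDiag_iff] at hnd
    have hne : kappa E x ≠ kappa E y := fun h => hnd (kappa_injective E h)
    rcases lt_or_gt_of_ne hne with h | h
    · exact ⟨(x, y), rfl, h⟩
    · exact ⟨(y, x), Sym2.eq_swap, h⟩

lemma ends_spec {E : Finset (Sym2 (Vtx d))} {e : Sym2 (Vtx d)} (hnd : ¬ e.IsDiag) :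
    e = s(anchor E e, far E e) ∧ kappa E (anchor E e) < kappa E (far E e) := by
  rw [anchor, far, ends, dif_pos (exists_ends (E := E) hnd)]
  exact (exists_ends (E := E) hnd).choose_spec

lemma anchor_far_eq {E : Finset (Sym2 (Vtx d))} {e : Sym2 (Vtx d)} {u v : Vtx d}
    (he : e = s(u, v)) (h : kappa E u < kappa E v) :
    anchor E e = u ∧ far E e = v := by
  have hnd : ¬ e.IsDiag := by
    rw [he, Sym2.mk_isDiag_iff]
    intro hh; subst hh; exact lt_irrefl _ h
  obtain ⟨he2, hlt⟩ := ends_spec (E := E) hnd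
  have he3 : s(u, v) = s(anchor E e, far E e) := he.symm.trans he2
  rcases Sym2.eq_iff.1 he3 with ⟨h1, h2⟩ | ⟨h1, h2⟩
  · exact ⟨h1.symm, h2.symm⟩
  · exfalso; rw [← h1, ← h2] at hlt; exact lt_asymm h hlt

/-- unit vector in direction `c` -/
def unitv (c : Fin d × Bool) : Vtx d := fun j => if j = c.1 then (if c.2 then 1 else -1) else 0

lemma exists_unit {x y : Vtx d} (h : (∑ i, |x i - y i|) = 1) : ∃ c, y = x + unitv c := by
  have h0 : ∃ i, x i - y i ≠ 0 := by
    by_contra hc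
    push_neg at hc
    rw [Finset.sum_eq_zero (fun i _ => by rw [hc i, abs_zero])] at h
    exact one_ne_zero h.symm
  obtain ⟨i0, hi0⟩ := h0
  have habs : 1 ≤ |x i0 - y i0| := Int.one_le_abs hi0
  have hle : |x i0 - y i0| ≤ ∑ i, |x i - y i| :=
    Finset.single_le_sum (f := fun i => |x i - y i|) (fun i _ => abs_nonneg _)
      (Finset.mem_univ i0)
  have h1 : |x i0 - y i0| = 1 := le_antisymm (h ▸ hle) habs
  have hrest : ∀ j, j ≠ i0 → x j = y j := by
    have hadd := Finset.add_sum_erase Finset.univ (fun i => |x i - y i|) (Finset.mem_univ i0)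
    have hsum : ∑ j ∈ Finset.univ.erase i0, |x j - y j| = 0 := by linarith
    intro j hj
    have h2 := (Finset.sum_eq_zero_iff_of_nonneg (fun i _ => abs_nonneg _)).1 hsum j
      (Finset.mem_erase.2 ⟨hj, Finset.mem_univ j⟩)
    have h3 : x j - y j = 0 := abs_eq_zero.1 h2
    omega
  rcases (abs_eq (by norm_num : (0:ℤ) ≤ 1)).1 h1 with hc | hc
  · refine ⟨(i0, false), funext fun j => ?_⟩
    by_cases hj : j = i0
    · subst hj; simp [Pi.add_apply, unitv]; omega
    · simp [Pi.add_apply, unitv, hj]; exact (hrest j hj).symm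
  · refine ⟨(i0, true), funext fun j => ?_⟩
    by_cases hj : j = i0
    · subst hj; simp [Pi.add_apply, unitv]; omega
    · simp [Pi.add_apply, unitv, hj]; exact (hrest j hj).symm


section Graph

variable {E : Finset (Sym2 (Vtx d))} {e : Sym2 (Vtx d)}

lemma edge_not_diag (hE : IsLatticeAnimal d (nnGraph d) E) (he : e ∈ E) : ¬ e.IsDiag :=
  (nnGraph d).not_isDiag_of_mem_edgeSet (hE.1 he)

lemma edge_spec (hE : IsLatticeAnimal d (nnGraph d) E) (he : e ∈ E) :
    e = s(anchor E e, far E e) ∧ kappa E (anchor E e) < kappa E (far E e) :=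
  ends_spec (edge_not_diag hE he)

lemma edge_adj (hE : IsLatticeAnimal d (nnGraph d) E) (he : e ∈ E) :
    (bondGraph d E).Adj (anchor E e) (far E e) := by
  obtain ⟨he2, hlt⟩ := edge_spec hE he
  rw [bondGraph, SimpleGraph.fromEdgeSet_adj]
  refine ⟨by rw [← he2]; exact he, fun h => ?_⟩
  rw [h] at hlt; exact lt_irrefl _ hlt

lemma anchor_mem_support (hE : IsLatticeAnimal d (nnGraph d) E) (he : e ∈ E) :
    anchor E e ∈ (bondGraph d E).support :=
  ⟨far E e, edge_adj hE he⟩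

lemma far_mem_support (hE : IsLatticeAnimal d (nnGraph d) E) (he : e ∈ E) :
    far E e ∈ (bondGraph d E).support :=
  ⟨anchor E e, (edge_adj hE he).symm⟩

lemma reach0 (hE : IsLatticeAnimal d (nnGraph d) E) (hne : E.Nonempty) {v : Vtx d}
    (hv : v ∈ (bondGraph d E).support) : (bondGraph d E).Reachable 0 v := by
  by_cases h : v = 0
  · subst h; exact SimpleGraph.Reachable.refl 0
  · exact hE.2.1 (hE.2.2 hne) hv (fun hh => h hh.symm)

lemma nn_adj_of_mem (hE : IsLatticeAnimal d (nnGraph d) E) (he : e ∈ E) :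
    (∑ i, |anchor E e i - far E e i|) = 1 := by
  have h1 := hE.1 he
  rw [(edge_spec hE he).1, SimpleGraph.mem_edgeSet] at h1
  exact h1

/-- every edge's `far` endpoint is nonzero -/
lemma far_ne_zero (hE : IsLatticeAnimal d (nnGraph d) E) (he : e ∈ E) : far E e ≠ 0 := by
  intro h
  obtain ⟨-, hlt⟩ := edge_spec hE he
  have hreach := reach0 hE ⟨e, he⟩ (anchor_mem_support hE he)
  have hd := kappa_le_dist hlt
  rw [h] at hd
  have h0 : (bondGraph d E).dist 0 0 = 0 := SimpleGraph.dist_self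
  have ha : (bondGraph d E).dist 0 (anchor E e) = 0 := by omega
  have := SimpleGraph.Reachable.dist_eq_zero_iff hreach |>.1 ha
  rw [h, ← this] at hlt
  exact lt_irrefl _ hlt

/-- every nonzero vertex in the support is the `far` end of some edge -/
lemma exists_parent_edge (hE : IsLatticeAnimal d (nnGraph d) E) {v : Vtx d}
    (hv : v ∈ (bondGraph d E).support) (hv0 : v ≠ 0) (hne : E.Nonempty) :
    ∃ f ∈ E, far E f = v := by
  have hreach := reach0 hE hne hv
  have hpos : 0 < (bondGraph d E).dist 0 v := hreach.pos_dist_of_ne (Ne.symm hv0)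
  obtain ⟨p, hp⟩ := hreach.exists_walk_length_eq_dist
  obtain ⟨w, hadj, q, hq⟩ := SimpleGraph.Walk.exists_eq_cons_of_ne hv0 p.reverse
  have hql : q.length = (bondGraph d E).dist 0 v - 1 := by
    have := congrArg SimpleGraph.Walk.length hq
    rw [SimpleGraph.Walk.length_reverse, hp] at this
    rw [SimpleGraph.Walk.length_cons] at this
    omega
  have hdw : (bondGraph d E).dist 0 w < (bondGraph d E).dist 0 v := by
    have h1 : (bondGraph d E).dist w 0 ≤ q.length := SimpleGraph.dist_le q
    rw [SimpleGraph.dist_comm] at h1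
    omega
  have hklt : kappa E w < kappa E v := kappa_lt_of_dist_lt hdw
  have hmem : s(w, v) ∈ E := by
    have := hadj.symm
    rw [bondGraph, SimpleGraph.fromEdgeSet_adj] at this
    exact this.1
  exact ⟨s(w, v), hmem, (anchor_far_eq rfl hklt).2⟩

open Classical in
/-- direction code of an edge -/
noncomputable def dirc (hd : 0 < d) (E : Finset (Sym2 (Vtx d))) (e : Sym2 (Vtx d)) :
    Fin d × Bool :=
  if h : ∃ c, far E e = anchor E e + unitv c then h.choose else (⟨0, hd⟩, true)

lemma dirc_spec (hd : 0 < d) (hE : IsLatticeAnimal d (nnGraph d) E) (he : e ∈ E) :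
    far E e = anchor E e + unitv (dirc hd E e) := by
  have hex : ∃ c, far E e = anchor E e + unitv c := exists_unit (nn_adj_of_mem hE he)
  rw [dirc, dif_pos hex]
  exact hex.choose_spec

open Classical in
/-- a parent edge: some edge whose `far` endpoint is our `anchor` -/
noncomputable def pEdge (E : Finset (Sym2 (Vtx d))) (e : Sym2 (Vtx d)) : Sym2 (Vtx d) :=
  if h : ∃ f ∈ E, far E f = anchor E e then h.choose else e

lemma pEdge_spec (hE : IsLatticeAnimal d (nnGraph d) E) (he : e ∈ E)
    (ha : anchor E e ≠ 0) : pEdge E e ∈ E ∧ far E (pEdge E e) = anchor E e := by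
  have hex : ∃ f ∈ E, far E f = anchor E e :=
    exists_parent_edge hE (anchor_mem_support hE he) ha ⟨e, he⟩
  rw [pEdge, dif_pos hex]
  exact ⟨hex.choose_spec.1, hex.choose_spec.2⟩

end Graph


section Labeled

variable {n : ℕ} {E : Finset (Sym2 (Vtx d))} {f : Sym2 (Vtx d)}

/-- the edge with label `i` -/
noncomputable def emap (hcard : E.card = n) (σ : Equiv.Perm (Fin n)) (i : Fin n) :
    Sym2 (Vtx d) :=
  ((Finset.equivFinOfCardEq hcard).symm (σ i) : Sym2 (Vtx d))

lemma emap_mem (hcard : E.card = n) (σ : Equiv.Perm (Fin n)) (i : Fin n) :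
    emap hcard σ i ∈ E :=
  ((Finset.equivFinOfCardEq hcard).symm (σ i)).2

lemma emap_surj (hcard : E.card = n) (σ : Equiv.Perm (Fin n)) (hf : f ∈ E) :
    ∃ j, emap hcard σ j = f :=
  ⟨σ⁻¹ ((Finset.equivFinOfCardEq hcard) ⟨f, hf⟩), by simp [emap]⟩

open Classical in
/-- the label of an edge -/
noncomputable def pidx (hn : 0 < n) (hcard : E.card = n) (σ : Equiv.Perm (Fin n))
    (f : Sym2 (Vtx d)) : Fin n :=
  if h : ∃ j : Fin n, emap hcard σ j = f then h.choose else ⟨0, hn⟩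

lemma pidx_spec (hn : 0 < n) (hcard : E.card = n) (σ : Equiv.Perm (Fin n)) (hf : f ∈ E) :
    emap hcard σ (pidx hn hcard σ f) = f := by
  rw [pidx, dif_pos (emap_surj hcard σ hf)]
  exact (emap_surj hcard σ hf).choose_spec

/-- the parent map on labels -/
noncomputable def ptree (hn : 0 < n) (hcard : E.card = n) (σ : Equiv.Perm (Fin n)) :
    Fin (n+1) → Fin (n+1) := fun v =>
  if h0 : v = 0 then 0 else
    if anchor E (emap hcard σ (v.pred h0)) = 0 then 0
    else (pidx hn hcard σ (pEdge E (emap hcard σ (v.pred h0)))).succ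

lemma ptree_zero (hn : 0 < n) (hcard : E.card = n) (σ : Equiv.Perm (Fin n)) :
    ptree hn hcard σ 0 = 0 := dif_pos rfl

lemma ptree_succ (hn : 0 < n) (hcard : E.card = n) (σ : Equiv.Perm (Fin n)) (i : Fin n) :
    ptree hn hcard σ i.succ =
      if anchor E (emap hcard σ i) = 0 then 0
      else (pidx hn hcard σ (pEdge E (emap hcard σ i))).succ := by
  rw [ptree, dif_neg (Fin.succ_ne_zero i), Fin.pred_succ]

/-- the rank of a label -/
noncomputable def mu (hcard : E.card = n) (σ : Equiv.Perm (Fin n)) (v : Fin (n+1)) :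
    ℕ ×ₗ List ℤ :=
  if h0 : v = 0 then kappa E 0 else kappa E (far E (emap hcard σ (v.pred h0)))

lemma mu_succ (hcard : E.card = n) (σ : Equiv.Perm (Fin n)) (i : Fin n) :
    mu hcard σ i.succ = kappa E (far E (emap hcard σ i)) := by
  rw [mu, dif_neg (Fin.succ_ne_zero i), Fin.pred_succ]

lemma mu_lt (hE : IsLatticeAnimal d (nnGraph d) E) (hn : 0 < n) (hcard : E.card = n)
    (σ : Equiv.Perm (Fin n)) {i : Fin n} (hA : anchor E (emap hcard σ i) ≠ 0) :
    mu hcard σ (ptree hn hcard σ i.succ) < mu hcard σ i.succ := by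
  rw [ptree_succ, if_neg hA]
  have hpe := pEdge_spec hE (emap_mem hcard σ i) hA
  have hj := pidx_spec hn hcard σ hpe.1
  rw [mu_succ, mu_succ, hj, hpe.2]
  exact (edge_spec hE (emap_mem hcard σ i)).2

/-- the cardinal rank used for induction -/
noncomputable def gm (hcard : E.card = n) (σ : Equiv.Perm (Fin n)) (v : Fin (n+1)) : ℕ :=
  (Finset.univ.filter (fun w => mu hcard σ w < mu hcard σ v)).card

lemma gm_lt (hcard : E.card = n) (σ : Equiv.Perm (Fin n)) {u v : Fin (n+1)}
    (h : mu hcard σ u < mu hcard σ v) : gm hcard σ u < gm hcard σ v := by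
  classical
  apply Finset.card_lt_card
  rw [Finset.ssubset_iff_of_subset]
  · exact ⟨u, Finset.mem_filter.2 ⟨Finset.mem_univ _, h⟩,
      fun hc => lt_irrefl _ (Finset.mem_filter.1 hc).2⟩
  · intro w hw
    rw [Finset.mem_filter] at hw ⊢
    exact ⟨hw.1, hw.2.trans h⟩

lemma gm_decrease (hE : IsLatticeAnimal d (nnGraph d) E) (hn : 0 < n) (hcard : E.card = n)
    (σ : Equiv.Perm (Fin n)) {v : Fin (n+1)} (h0 : v ≠ 0) (h1 : ptree hn hcard σ v ≠ 0) :
    gm hcard σ (ptree hn hcard σ v) < gm hcard σ v := by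
  have hv : (v.pred h0).succ = v := Fin.succ_pred v h0
  have hA : anchor E (emap hcard σ (v.pred h0)) ≠ 0 := by
    intro h
    apply h1
    rw [← hv, ptree_succ, if_pos h]
  have hmu := mu_lt hE hn hcard σ hA
  rw [hv] at hmu
  exact gm_lt hcard σ hmu

lemma ptree_isPTree (hE : IsLatticeAnimal d (nnGraph d) E) (hn : 0 < n) (hcard : E.card = n)
    (σ : Equiv.Perm (Fin n)) : IsPTree (ptree hn hcard σ) := by
  refine ⟨ptree_zero hn hcard σ, ?_⟩
  have main : ∀ (N : ℕ) v, gm hcard σ v ≤ N → ∃ k, (ptree hn hcard σ)^[k] v = 0 := by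
    intro N
    induction N with
    | zero =>
      intro v hv
      by_cases h0 : v = 0
      · exact ⟨0, h0⟩
      by_cases h1 : ptree hn hcard σ v = 0
      · exact ⟨1, h1⟩
      · exact absurd (gm_decrease hE hn hcard σ h0 h1) (by omega)
    | succ N ih =>
      intro v hv
      by_cases h0 : v = 0
      · exact ⟨0, h0⟩
      by_cases h1 : ptree hn hcard σ v = 0
      · exact ⟨1, h1⟩
      · have := gm_decrease hE hn hcard σ h0 h1
        obtain ⟨k, hk⟩ := ih (ptree hn hcard σ v) (by omega)
        exact ⟨k + 1, by rw [Function.iterate_succ_apply, hk]⟩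
  exact fun v => main (gm hcard σ v) v le_rfl

variable {E' : Finset (Sym2 (Vtx d))}

lemma reconstruction (hd : 0 < d) (hE : IsLatticeAnimal d (nnGraph d) E)
    (hE' : IsLatticeAnimal d (nnGraph d) E') (hn : 0 < n)
    (hcard : E.card = n) (hcard' : E'.card = n)
    (σ σ' : Equiv.Perm (Fin n))
    (hp : ptree hn hcard σ = ptree hn hcard' σ')
    (hdir : ∀ i, dirc hd E (emap hcard σ i) = dirc hd E' (emap hcard' σ' i)) :
    ∀ i, emap hcard σ i = emap hcard' σ' i := by
  have main : ∀ (N : ℕ) (i : Fin n), gm hcard σ i.succ ≤ N →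
      anchor E (emap hcard σ i) = anchor E' (emap hcard' σ' i) ∧
      far E (emap hcard σ i) = far E' (emap hcard' σ' i) := by
    intro N
    induction N with
    | zero =>
      intro i hN
      by_cases hA : anchor E (emap hcard σ i) = 0
      · have h1 : ptree hn hcard σ i.succ = 0 := by rw [ptree_succ, if_pos hA]
        have h2 : ptree hn hcard' σ' i.succ = 0 := by rw [← hp]; exact h1
        have hA' : anchor E' (emap hcard' σ' i) = 0 := by
          by_contra hc
          rw [ptree_succ, if_neg hc] at h2
          exact Fin.succ_ne_zero _ h2
        have hanch : anchor E (emap hcard σ i) = anchor E' (emap hcard' σ' i) := by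
          rw [hA, hA']
        refine ⟨hanch, ?_⟩
        rw [dirc_spec hd hE (emap_mem hcard σ i), dirc_spec hd hE' (emap_mem hcard' σ' i),
          hanch, hdir i]
      · exfalso
        have h1 : ptree hn hcard σ i.succ ≠ 0 := by
          rw [ptree_succ, if_neg hA]; exact Fin.succ_ne_zero _
        have := gm_decrease hE hn hcard σ (Fin.succ_ne_zero i) h1
        omega
    | succ N ih =>
      intro i hN
      by_cases hA : anchor E (emap hcard σ i) = 0
      · have h1 : ptree hn hcard σ i.succ = 0 := by rw [ptree_succ, if_pos hA]
        have h2 : ptree hn hcard' σ' i.succ = 0 := by rw [← hp]; exact h1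
        have hA' : anchor E' (emap hcard' σ' i) = 0 := by
          by_contra hc
          rw [ptree_succ, if_neg hc] at h2
          exact Fin.succ_ne_zero _ h2
        have hanch : anchor E (emap hcard σ i) = anchor E' (emap hcard' σ' i) := by
          rw [hA, hA']
        refine ⟨hanch, ?_⟩
        rw [dirc_spec hd hE (emap_mem hcard σ i), dirc_spec hd hE' (emap_mem hcard' σ' i),
          hanch, hdir i]
      · -- anchor nonzero on the left; show the same on the right and recurse
        have h1 : ptree hn hcard σ i.succ
            = (pidx hn hcard σ (pEdge E (emap hcard σ i))).succ := by
          rw [ptree_succ, if_neg hA]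
        have h2 := h1
        rw [hp] at h2
        have hA' : anchor E' (emap hcard' σ' i) ≠ 0 := by
          intro hc
          rw [ptree_succ, if_pos hc] at h2
          exact Fin.succ_ne_zero _ h2.symm
        have h3 : ptree hn hcard' σ' i.succ
            = (pidx hn hcard' σ' (pEdge E' (emap hcard' σ' i))).succ := by
          rw [ptree_succ, if_neg hA']
        set j := pidx hn hcard σ (pEdge E (emap hcard σ i)) with hjdef
        have hjj : pidx hn hcard' σ' (pEdge E' (emap hcard' σ' i)) = j :=
          Fin.succ_injective _ (h3.symm.trans h2)
        -- measure decreases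
        have hdec : gm hcard σ j.succ < gm hcard σ i.succ := by
          have h4 : ptree hn hcard σ i.succ ≠ 0 := by rw [h1]; exact Fin.succ_ne_zero _
          have := gm_decrease hE hn hcard σ (Fin.succ_ne_zero i) h4
          rw [h1] at this
          exact this
        obtain ⟨ihanch, ihfar⟩ := ih j (by omega)
        -- identify anchors with far of parent edges
        have hpe := pEdge_spec hE (emap_mem hcard σ i) hA
        have hpe' := pEdge_spec hE' (emap_mem hcard' σ' i) hA'
        have hj1 : emap hcard σ j = pEdge E (emap hcard σ i) := pidx_spec hn hcard σ hpe.1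
        have hj2 : emap hcard' σ' j = pEdge E' (emap hcard' σ' i) := by
          rw [← hjj]; exact pidx_spec hn hcard' σ' hpe'.1
        have hanch : anchor E (emap hcard σ i) = anchor E' (emap hcard' σ' i) := by
          rw [← hpe.2, ← hpe'.2, ← hj1, ← hj2]
          exact ihfar
        refine ⟨hanch, ?_⟩
        rw [dirc_spec hd hE (emap_mem hcard σ i), dirc_spec hd hE' (emap_mem hcard' σ' i),
          hanch, hdir i]
  intro i
  obtain ⟨h1, h2⟩ := main (gm hcard σ i.succ) i le_rfl
  rw [(edge_spec hE (emap_mem hcard σ i)).1, (edge_spec hE' (emap_mem hcard' σ' i)).1, h1, h2]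

end Labeled


section Final

set_option maxHeartbeats 2000000 in
lemma main_count (d : ℕ) (hd : 1 ≤ d) (n : ℕ) (hn : 0 < n) :
    (Set.ncard {E : Finset (Sym2 (Vtx d)) | E.card = n ∧ IsLatticeAnimal d (nnGraph d) E})
      * n.factorial ≤ (n + 1) ^ (n - 1) * (2 * d) ^ n := by
  classical
  have hinj : Function.Injective
      (fun x : {E : Finset (Sym2 (Vtx d)) // E.card = n ∧ IsLatticeAnimal d (nnGraph d) E}
          × Equiv.Perm (Fin n) =>
        ((fun t : Fin (n-1) => (code n Finset.univ (ptree hn x.1.prop.1 x.2)).getD t 0,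
          fun i : Fin n => dirc hd x.1.val (emap x.1.prop.1 x.2 i)) :
          (Fin (n-1) → Fin (n+1)) × (Fin n → Fin d × Bool))) := by
    rintro ⟨⟨E, hEA⟩, σ⟩ ⟨⟨E', hEA'⟩, σ'⟩ h
    rw [Prod.ext_iff] at h
    obtain ⟨h1, h2⟩ := h
    have hp : ptree hn hEA.1 σ = ptree hn hEA'.1 σ' :=
      pruefer_inj hn (ptree_isPTree hEA.2 hn hEA.1 σ) (ptree_isPTree hEA'.2 hn hEA'.1 σ')
        (fun t => congrFun h1 t)
    have hdir : ∀ i, dirc hd E (emap hEA.1 σ i) = dirc hd E' (emap hEA'.1 σ' i) :=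
      fun i => congrFun h2 i
    have hemap := reconstruction hd hEA.2 hEA'.2 hn hEA.1 hEA'.1 σ σ' hp hdir
    have hEE : E = E' := by
      ext f
      constructor
      · intro hf
        obtain ⟨j, hj⟩ := emap_surj hEA.1 σ hf
        rw [← hj, hemap j]; exact emap_mem _ _ _
      · intro hf
        obtain ⟨j, hj⟩ := emap_surj hEA'.1 σ' hf
        rw [← hj, ← hemap j]; exact emap_mem _ _ _
    subst hEE
    have hσ : σ = σ' := by
      apply Equiv.ext
      intro i
      have h3 := hemap i
      have h4 : ((Finset.equivFinOfCardEq hEA.1).symm (σ i) : Sym2 (Vtx d))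
          = ((Finset.equivFinOfCardEq hEA.1).symm (σ' i) : Sym2 (Vtx d)) := h3
      exact (Finset.equivFinOfCardEq hEA.1).symm.injective (Subtype.coe_injective h4)
    rw [Prod.ext_iff]
    exact ⟨Subtype.ext rfl, hσ⟩
  have hle := Nat.card_le_card_of_injective _ hinj
  rw [Nat.card_prod, Nat.card_prod] at hle
  have e1 : Nat.card {E : Finset (Sym2 (Vtx d)) // E.card = n ∧ IsLatticeAnimal d (nnGraph d) E}
      = Set.ncard {E : Finset (Sym2 (Vtx d)) | E.card = n ∧ IsLatticeAnimal d (nnGraph d) E} :=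
    Nat.card_coe_set_eq _
  have e2 : Nat.card (Equiv.Perm (Fin n)) = n.factorial := by
    rw [Nat.card_eq_fintype_card, Fintype.card_perm, Fintype.card_fin]
  have e3 : Nat.card (Fin (n-1) → Fin (n+1)) = (n+1)^(n-1) := by
    rw [Nat.card_eq_fintype_card, Fintype.card_fun]; simp
  have e4 : Nat.card (Fin n → Fin d × Bool) = (d*2)^n := by
    rw [Nat.card_eq_fintype_card, Fintype.card_fun]; simp
  rw [e1, e2, e3, e4] at hle
  calc Set.ncard {E : Finset (Sym2 (Vtx d)) | E.card = n ∧ IsLatticeAnimal d (nnGraph d) E}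
        * n.factorial ≤ (n+1) ^ (n-1) * (d * 2) ^ n := hle
    _ = (n + 1) ^ (n - 1) * (2 * d) ^ n := by rw [Nat.mul_comm d 2]

end Final

end AnimalProof

/-- For the nearest-neighbour model on `ℤ^d` in every dimension `d ≥ 1` and every
`n ≥ 0`, the number of lattice animals satisfies `a_n(d) ≤ (2d)^n (n+1)^{n-1}/n!`. -/
theorem animal_count_upper_bound_nearest_neighbour (d : ℕ) (hd : 1 ≤ d) (n : ℕ) :
    (animalCount d (nnGraph d) n : ℝ)
      ≤ (2 * d : ℝ) ^ n * ((n + 1 : ℝ) ^ (n - 1) / (n.factorial : ℝ)) := by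
  rcases Nat.eq_zero_or_pos n with hn | hn
  · subst hn
    have hanimal0 : IsLatticeAnimal d (nnGraph d) (∅ : Finset (Sym2 (Vtx d))) := by
      refine ⟨by simp, ?_, by simp⟩
      have hbot : bondGraph d ∅ = ⊥ := by
        rw [bondGraph]; simpa using SimpleGraph.fromEdgeSet_empty
      rw [hbot]
      have : (⊥ : SimpleGraph (Vtx d)).support = ∅ := by
        ext v; simp [SimpleGraph.mem_support]
      rw [this]
      exact Set.pairwise_empty _
    have hset : {E : Finset (Sym2 (Vtx d)) | E.card = 0 ∧ IsLatticeAnimal d (nnGraph d) E}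
        = {(∅ : Finset (Sym2 (Vtx d)))} := by
      ext E
      simp only [Set.mem_setOf_eq, Set.mem_singleton_iff, Finset.card_eq_zero]
      exact ⟨fun h => h.1, fun h => ⟨h, h ▸ hanimal0⟩⟩
    rw [animalCount, hset, Set.ncard_singleton]
    norm_num
  · have key := AnimalProof.main_count d hd n hn
    rw [animalCount]
    have hfac : (0:ℝ) < (n.factorial : ℝ) := by
      exact_mod_cast n.factorial_pos
    have hrw : (2 * (d:ℝ)) ^ n * ((n + 1 : ℝ) ^ (n - 1) / (n.factorial : ℝ))
        = ((2 * (d:ℝ)) ^ n * (n + 1 : ℝ) ^ (n - 1)) / (n.factorial : ℝ) := by ring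
    rw [hrw, le_div_iff₀ hfac]
    have h2 := (Nat.cast_le (α := ℝ)).2 key
    push_cast at h2
    nlinarith [h2]
end

section
/- For the spread-out model on ℤ^d in every dimension d ≥ 1, every L ≥ 1, and every n ≥ 0, the number of lattice animals satisfies a_n(d,L) ≤ K^n (n+1)^{n−1}/n!, where K = (2L+1)^d − 1. -/
open Filter

namespace AnimalProof

variable {n : ℕ}

/-- `p` is a parent function of a tree on `Fin (n+1)` rooted at `0`. -/
def IsTree (p : Fin (n+1) → Fin (n+1)) : Prop := p 0 = 0 ∧ ∀ i, ∃ k, p^[k] i = 0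

noncomputable def dep (hp : ∀ i : Fin (n+1), ∃ k, (p : Fin (n+1) → Fin (n+1))^[k] i = 0)
    (i : Fin (n+1)) : ℕ := Nat.find (hp i)

variable {p : Fin (n+1) → Fin (n+1)} (hp : ∀ i, ∃ k, p^[k] i = 0)

lemma dep_spec (i : Fin (n+1)) : p^[dep hp i] i = 0 := Nat.find_spec (hp i)

lemma dep_min {i : Fin (n+1)} {t : ℕ} (ht : t < dep hp i) : p^[t] i ≠ 0 :=
  Nat.find_min (hp i) ht

lemma dep_eq_zero_iff {i : Fin (n+1)} : dep hp i = 0 ↔ i = 0 := by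
  constructor
  · intro h
    have := dep_spec hp i
    rw [h] at this
    simpa using this
  · intro h
    subst h
    have : p^[0] (0 : Fin (n+1)) = 0 := by simp
    exact Nat.le_zero.mp (Nat.find_le this)

lemma dep_apply {i : Fin (n+1)} (hi : i ≠ 0) : dep hp i = dep hp (p i) + 1 := by
  rw [dep, Nat.find_eq_iff]
  constructor
  · rw [Function.iterate_succ_apply]
    exact dep_spec hp (p i)
  · intro t ht
    match t with
    | 0 => simpa using hi
    | t + 1 =>
      rw [Function.iterate_succ_apply]
      exact dep_min hp (by omega)

end AnimalProof

namespace Joyal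

open AnimalProof

variable {n : ℕ} {p : Fin (n+1) → Fin (n+1)} (hp : ∀ i, ∃ k, p^[k] i = 0) (j : Fin (n+1))

/-- The path from `j` to the root. -/
def w (t : ℕ) : Fin (n+1) := p^[t] j

lemma w_succ (t : ℕ) : w (p := p) j (t + 1) = p (w (p := p) j t) :=
  Function.iterate_succ_apply' p t j

lemma dep_w {t : ℕ} (ht : t ≤ dep hp j) : dep hp (w (p := p) j t) = dep hp j - t := by
  induction t with
  | zero => simp [w]
  | succ t ih =>
    have ht' : t < dep hp j := by omega
    have hne : w (p := p) j t ≠ 0 := dep_min hp (by simpa [w] using ht')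
    have := dep_apply hp hne
    rw [w_succ] at *
    omega

lemma w_inj {a b : ℕ} (ha : a < dep hp j) (hb : b < dep hp j)
    (hab : w (p := p) j a = w (p := p) j b) : a = b := by
  have h1 := dep_w hp j (le_of_lt ha)
  have h2 := dep_w hp j (le_of_lt hb)
  rw [hab] at h1
  omega

lemma w_dep : w (p := p) j (dep hp j) = 0 := dep_spec hp j

lemma w_ne_zero {t : ℕ} (ht : t < dep hp j) : w (p := p) j t ≠ 0 := dep_min hp ht

end Joyal

namespace Joyal

open AnimalProof

variable {n : ℕ} {p : Fin (n+1) → Fin (n+1)} (hp : ∀ i, ∃ k, p^[k] i = 0) (j : Fin (n+1))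

/-- The set of vertices on the path from `j` to the root (excluding the root). -/
noncomputable def S : Finset (Fin (n+1)) := (Finset.range (dep hp j)).image (w (p := p) j)

lemma mem_S {i : Fin (n+1)} :
    i ∈ S hp j ↔ ∃ t, t < dep hp j ∧ w (p := p) j t = i := by
  simp [S, Finset.mem_image, Finset.mem_range]

lemma card_S : (S hp j).card = dep hp j := by
  rw [S, Finset.card_image_of_injOn, Finset.card_range]
  intro a ha b hb hab
  exact w_inj hp j (by simpa using ha) (by simpa using hb) hab

lemma zero_not_mem_S : (0 : Fin (n+1)) ∉ S hp j := by
  rw [mem_S]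
  rintro ⟨t, ht, hw⟩
  exact w_ne_zero hp j ht hw

/-- The sorted list of path vertices. -/
noncomputable def l : List (Fin (n+1)) := (S hp j).sort (· ≤ ·)

lemma length_l : (l hp j).length = dep hp j := by
  rw [l, Finset.length_sort, card_S]

lemma mem_l {i : Fin (n+1)} : i ∈ l hp j ↔ i ∈ S hp j := Finset.mem_sort _

lemma nodup_l : (l hp j).Nodup := Finset.sort_nodup _ _

/-- The Joyal encoding of the rooted tree `p` with marked vertex `j`. -/
noncomputable def f : Fin (n+1) → Fin (n+1) := fun i =>
  if i ∈ S hp j then w (p := p) j ((l hp j).idxOf i) else p i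

lemma f_getElem {t : ℕ} (ht : t < dep hp j) :
    f hp j ((l hp j)[t]'(by rw [length_l]; exact ht)) = w (p := p) j t := by
  have hlen : t < (l hp j).length := by rw [length_l]; exact ht
  have hmem : (l hp j)[t] ∈ S hp j := (mem_l hp j).mp (List.getElem_mem _)
  rw [f, if_pos hmem, (nodup_l hp j).idxOf_getElem t hlen]

lemma indexOf_lt {i : Fin (n+1)} (hi : i ∈ S hp j) :
    (l hp j).idxOf i < dep hp j := by
  rw [← length_l hp j]
  exact List.idxOf_lt_length_iff.mpr ((mem_l hp j).mpr hi)

lemma f_mem_S {i : Fin (n+1)} (hi : i ∈ S hp j) : f hp j i ∈ S hp j := by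
  rw [f, if_pos hi]
  exact (mem_S hp j).mpr ⟨_, indexOf_lt hp j hi, rfl⟩

lemma f_of_not_mem {i : Fin (n+1)} (hi : i ∉ S hp j) : f hp j i = p i := by
  rw [f, if_neg hi]

lemma iterate_f_mem_S {i : Fin (n+1)} (hi : i ∈ S hp j) (s : ℕ) :
    (f hp j)^[s] i ∈ S hp j := by
  induction s with
  | zero => simpa using hi
  | succ s ih => rw [Function.iterate_succ_apply']; exact f_mem_S hp j ih

lemma f_injOn : ∀ i ∈ S hp j, ∀ i' ∈ S hp j, f hp j i = f hp j i' → i = i' := by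
  intro i hi i' hi' h
  have h' : w (p := p) j ((l hp j).idxOf i) = w (p := p) j ((l hp j).idxOf i') := by
    simpa [f, hi, hi'] using h
  have := w_inj hp j (indexOf_lt hp j hi) (indexOf_lt hp j hi') h'
  have h1 : ((l hp j).idxOf i) < (l hp j).length :=
    List.idxOf_lt_length_iff.mpr ((mem_l hp j).mpr hi)
  have h2 : ((l hp j).idxOf i') < (l hp j).length :=
    List.idxOf_lt_length_iff.mpr ((mem_l hp j).mpr hi')
  calc i = (l hp j)[(l hp j).idxOf i] := (List.getElem_idxOf h1).symm
    _ = (l hp j)[(l hp j).idxOf i'] := by congr 1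
    _ = i' := List.getElem_idxOf h2

end Joyal

namespace Joyal

open AnimalProof

variable {n : ℕ} {p : Fin (n+1) → Fin (n+1)} (hp : ∀ i, ∃ k, p^[k] i = 0) (j : Fin (n+1))

lemma f_zero (hp0 : p 0 = 0) : f hp j 0 = 0 := by
  rw [f_of_not_mem hp j (zero_not_mem_S hp j), hp0]

lemma iterate_cancel {a : ℕ} : ∀ {x y : Fin (n+1)}, x ∈ S hp j → y ∈ S hp j →
    (f hp j)^[a] x = (f hp j)^[a] y → x = y := by
  induction a with
  | zero => intro x y _ _ h; simpa using h
  | succ a ih =>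
    intro x y hx hy h
    rw [Function.iterate_succ_apply, Function.iterate_succ_apply] at h
    exact f_injOn hp j x hx y hy (ih (f_mem_S hp j hx) (f_mem_S hp j hy) h)

lemma periodic_of_mem {i : Fin (n+1)} (hi : i ∈ S hp j) :
    ∃ t, 1 ≤ t ∧ (f hp j)^[t] i = i := by
  have : ∃ a b : ℕ, a ≠ b ∧ (f hp j)^[a] i = (f hp j)^[b] i := by
    have : ¬ Function.Injective (fun s : ℕ =>
        (⟨(f hp j)^[s] i, iterate_f_mem_S hp j hi s⟩ : {x // x ∈ S hp j})) :=
      not_injective_infinite_finite _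
    rw [Function.not_injective_iff] at this
    obtain ⟨a, b, hab, hne⟩ := this
    exact ⟨a, b, hne, by simpa using hab⟩
  obtain ⟨a, b, hab, he⟩ := this
  rcases Nat.lt_or_ge a b with h | h
  · refine ⟨b - a, by omega, ?_⟩
    have : (f hp j)^[a] ((f hp j)^[b-a] i) = (f hp j)^[a] i := by
      rw [← Function.iterate_add_apply]
      rw [show a + (b - a) = b by omega]
      exact he.symm
    exact iterate_cancel hp j (iterate_f_mem_S hp j hi _) hi this
  · have hba : b < a := by omega
    refine ⟨a - b, by omega, ?_⟩
    have : (f hp j)^[b] ((f hp j)^[a-b] i) = (f hp j)^[b] i := by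
      rw [← Function.iterate_add_apply]
      rw [show b + (a - b) = a by omega]
      exact he
    exact iterate_cancel hp j (iterate_f_mem_S hp j hi _) hi this

lemma not_periodic_of_not_mem (hp0 : p 0 = 0) {i : Fin (n+1)} (hi : i ∉ S hp j) (hi0 : i ≠ 0)
    {t : ℕ} (ht : 1 ≤ t) (hper : (f hp j)^[t] i = i) : False := by
  -- strong induction on `dep hp i`
  suffices H : ∀ m : ℕ, ∀ i : Fin (n+1), dep hp i = m → i ∉ S hp j → i ≠ 0 →
      ∀ t, 1 ≤ t → (f hp j)^[t] i ≠ i by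
    exact H (dep hp i) i rfl hi hi0 t ht hper
  intro m
  induction m using Nat.strong_induction_on with
  | _ m ih =>
    intro i hdep hiS hi0 t ht hper
    have hfi : f hp j i = p i := f_of_not_mem hp j hiS
    obtain ⟨s, rfl⟩ : ∃ s, t = s + 1 := ⟨t - 1, by omega⟩
    by_cases hpi : p i ∈ S hp j
    · -- iterates of `p i` stay in `S`, but return to `i ∉ S`
      have : (f hp j)^[s] (p i) ∈ S hp j := iterate_f_mem_S hp j hpi s
      rw [← hfi, ← Function.iterate_succ_apply, hper] at this
      exact hiS this
    · by_cases hpi0 : p i = 0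
      · have : (f hp j)^[s+1] i = 0 := by
          rw [Function.iterate_succ_apply, hfi, hpi0]
          exact Function.iterate_fixed (by rw [f_zero hp j hp0]) s
        exact hi0 (hper ▸ this.symm ▸ rfl)
      · -- `p i` is also periodic, with smaller depth
        have hper' : (f hp j)^[s+1] (f hp j i) = f hp j i := by
          rw [← Function.iterate_succ_apply, Function.iterate_succ_apply', hper]
        rw [hfi] at hper'
        have hdep' : dep hp (p i) < m := by
          have := dep_apply hp hi0
          omega
        exact ih _ hdep' (p i) rfl hpi hpi0 (s+1) (by omega) hper'

lemma mem_S_iff_periodic (hp0 : p 0 = 0) {i : Fin (n+1)} :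
    i ∈ S hp j ↔ (i ≠ 0 ∧ ∃ t, 1 ≤ t ∧ (f hp j)^[t] i = i) := by
  constructor
  · intro hi
    refine ⟨?_, periodic_of_mem hp j hi⟩
    rintro rfl
    exact zero_not_mem_S hp j hi
  · rintro ⟨hi0, t, ht, hper⟩
    by_contra hiS
    exact not_periodic_of_not_mem hp j hp0 hiS hi0 ht hper

end Joyal

namespace Joyal

open AnimalProof

variable {n : ℕ}

noncomputable def joyal (x : {p : Fin (n+1) → Fin (n+1) // IsTree p} × Fin (n+1)) :
    {f : Fin (n+1) → Fin (n+1) // f 0 = 0} :=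
  ⟨f x.1.prop.2 x.2, f_zero x.1.prop.2 x.2 x.1.prop.1⟩

lemma w_zero {p : Fin (n+1) → Fin (n+1)} (j : Fin (n+1)) : w (p := p) j 0 = j := rfl

lemma joyal_injective : Function.Injective (joyal (n := n)) := by
  rintro ⟨⟨p, hp0, hp⟩, j⟩ ⟨⟨p', hp0', hp'⟩, j'⟩ hEq
  have hF : f hp j = f hp' j' := congrArg Subtype.val hEq
  -- the path sets agree
  have hS : S hp j = S hp' j' := by
    ext i
    rw [mem_S_iff_periodic hp j hp0, mem_S_iff_periodic hp' j' hp0', hF]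
  have hD : dep hp j = dep hp' j' := by
    rw [← card_S hp j, ← card_S hp' j', hS]
  have hl : l hp j = l hp' j' := by
    rw [l, l, hS]
  -- the paths agree
  have hw : ∀ t, t < dep hp j → w (p := p) j t = w (p := p') j' t := by
    intro t ht
    have ht' : t < dep hp' j' := hD ▸ ht
    have h1 := f_getElem hp j ht
    have h2 := f_getElem hp' j' ht'
    rw [← h1, ← h2, hF]
    congr 1
    simp only [hl]
  -- the marked vertices agree
  have hj : j = j' := by
    rcases Nat.eq_zero_or_pos (dep hp j) with h0 | h1
    · have hj0 : j = 0 := (dep_eq_zero_iff hp).mp h0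
      have hj0' : j' = 0 := (dep_eq_zero_iff hp').mp (hD ▸ h0)
      rw [hj0, hj0']
    · rw [← w_zero (p := p) j, ← w_zero (p := p') j', hw 0 h1]
  -- the parent functions agree
  have hw' : ∀ t, t ≤ dep hp j → w (p := p) j t = w (p := p') j' t := by
    intro t ht
    rcases Nat.lt_or_ge t (dep hp j) with h | h
    · exact hw t h
    · have h1 : t = dep hp j := by omega
      rw [h1, w_dep hp j, hD, w_dep hp' j']
  have hpp : p = p' := by
    funext i
    by_cases hi : i ∈ S hp j
    · obtain ⟨t, ht, hwt⟩ := (mem_S hp j).mp hi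
      have h1 : p i = w (p := p) j (t + 1) := by rw [← hwt]; exact (w_succ j t).symm
      obtain ⟨t'', ht'', hwt''⟩ := (mem_S hp' j').mp (hS ▸ hi)
      have ht2 : t'' < dep hp j := hD ▸ ht''
      have : w (p := p) j t'' = w (p := p) j t := by
        rw [hw t'' ht2, hwt'', hwt]
      have htt : t'' = t := w_inj hp j ht2 ht this
      have h2 : p' i = w (p := p') j' (t + 1) := by
        rw [← hwt'', htt]; exact (w_succ j' t).symm
      rw [h1, h2, hw' (t+1) (by omega)]
    · rw [← f_of_not_mem hp j hi, ← f_of_not_mem hp' j' (hS ▸ hi), hF]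
  subst hpp hj
  rfl

/-- Functions fixing `0` are counted by `(n+1)^n`. -/
noncomputable def fixZeroEquiv :
    {f : Fin (n+1) → Fin (n+1) // f 0 = 0} ≃ (Fin n → Fin (n+1)) where
  toFun f := fun i => f.1 i.succ
  invFun g := ⟨Fin.cases 0 g, by simp⟩
  left_inv f := by
    apply Subtype.ext
    funext i
    refine Fin.cases ?_ (fun k => rfl) i
    simpa using f.2.symm
  right_inv g := by funext i; rfl

lemma card_fixZero : Nat.card {f : Fin (n+1) → Fin (n+1) // f 0 = 0} = (n+1)^n := by
  rw [Nat.card_congr fixZeroEquiv, Nat.card_eq_fintype_card, Fintype.card_fun]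
  simp

lemma card_trees_mul : Nat.card {p : Fin (n+1) → Fin (n+1) // IsTree p} * (n+1) ≤ (n+1)^n := by
  have h1 : Nat.card ({p : Fin (n+1) → Fin (n+1) // IsTree p} × Fin (n+1))
      ≤ Nat.card {f : Fin (n+1) → Fin (n+1) // f 0 = 0} :=
    Nat.card_le_card_of_injective _ joyal_injective
  rw [Nat.card_prod, Nat.card_eq_fintype_card (α := Fin (n+1)), Fintype.card_fin,
    card_fixZero] at h1
  exact h1

lemma card_trees : Nat.card {p : Fin (n+1) → Fin (n+1) // IsTree p} ≤ (n+1)^(n-1) := by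
  rcases Nat.eq_zero_or_pos n with rfl | hn
  · have : Nat.card {p : Fin 1 → Fin 1 // IsTree p} ≤ Nat.card (Fin 1 → Fin 1) :=
      Nat.card_le_card_of_injective _ Subtype.val_injective
    simpa using this
  · have h := card_trees_mul (n := n)
    have hpow : (n+1)^n = (n+1)^(n-1) * (n+1) := by
      rw [← pow_succ]
      congr 1
      omega
    rw [hpow] at h
    exact Nat.le_of_mul_le_mul_right h (by omega)

end Joyal

namespace AnimalProof

variable {d L n : ℕ}

/-- positions of the vertices labelled `0, 1, …, n`: label `0` is the origin,
label `i+1` is the exit vertex of bond `i`. -/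
def vtx (ex : Fin n → Vtx d) : Fin (n+1) → Vtx d := Fin.cases 0 ex

/-- The exploration invariant on a set `D` of already-explored bonds. -/
structure GoodOn (σ : Fin n → Sym2 (Vtx d)) (D : Finset (Fin n))
    (q : Fin (n+1) → Fin (n+1)) (en ex : Fin n → Vtx d) : Prop where
  eq : ∀ i ∈ D, σ i = s(en i, ex i)
  ent : ∀ i ∈ D, en i = vtx ex (q i.succ)
  par : ∀ i ∈ D, q i.succ = 0 ∨ ∃ j ∈ D, q i.succ = j.succ
  root : q 0 = 0
  junk : ∀ i ∉ D, q i.succ = 0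
  reach : ∀ i ∈ D, ∃ k, q^[k] i.succ = 0

lemma iterate_stable {α : Type*} (q q' : α → α) (P : α → Prop)
    (hP : ∀ v, P v → P (q v)) (hagree : ∀ v, P v → q' v = q v) :
    ∀ k v, P v → q'^[k] v = q^[k] v ∧ P (q^[k] v) := by
  intro k
  induction k with
  | zero => intro v hv; exact ⟨rfl, hv⟩
  | succ k ih =>
    intro v hv
    obtain ⟨h1, h2⟩ := ih (q v) (hP v hv)
    rw [Function.iterate_succ_apply, Function.iterate_succ_apply, hagree v hv]
    exact ⟨h1, h2⟩

end AnimalProof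

namespace AnimalProof

variable {d L n : ℕ}

lemma vtx_zero (ex : Fin n → Vtx d) : vtx ex 0 = 0 := rfl

lemma vtx_succ (ex : Fin n → Vtx d) (j : Fin n) : vtx ex j.succ = ex j := by
  simp [vtx]

lemma extend {σ : Fin n → Sym2 (Vtx d)} {G : SimpleGraph (Vtx d)}
    (hE : IsLatticeAnimal d G (Finset.image σ Finset.univ))
    {D : Finset (Fin n)} {q : Fin (n+1) → Fin (n+1)} {en ex : Fin n → Vtx d}
    (hD : GoodOn σ D q en ex) (hne : D ≠ Finset.univ) :
    ∃ i₁ ∉ D, ∃ q' en' ex', GoodOn σ (insert i₁ D) q' en' ex' := by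
  classical
  obtain ⟨i₀, hi₀⟩ : ∃ i, i ∉ D := by
    by_contra hc
    push_neg at hc
    exact hne (Finset.eq_univ_iff_forall.mpr hc)
  set E := Finset.image σ Finset.univ with hEdef
  set A : Set (Vtx d) := insert 0 ((fun j => ex j) '' ↑D) with hAdef
  have hmemA : ∀ m ∈ D, en m ∈ A ∧ ex m ∈ A := by
    intro m hm
    refine ⟨?_, Set.mem_insert_of_mem _ ⟨m, hm, rfl⟩⟩
    rw [hD.ent m hm]
    rcases hD.par m hm with h0 | ⟨j, hj, hjs⟩
    · rw [h0, vtx_zero]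
      exact Set.mem_insert _ _
    · rw [hjs, vtx_succ]
      exact Set.mem_insert_of_mem _ ⟨j, hj, rfl⟩
  have key : ∃ i, i ∉ D ∧ ∃ x, x ∈ σ i ∧ x ∈ A := by
    by_contra hcon
    push_neg at hcon
    have hclosed : ∀ a b : Vtx d, a ∈ A → (bondGraph d E).Adj a b → b ∈ A := by
      intro a b ha hab
      rw [bondGraph, SimpleGraph.fromEdgeSet_adj] at hab
      obtain ⟨habE, hne'⟩ := hab
      obtain ⟨m, -, hm⟩ := Finset.mem_image.mp (Finset.mem_coe.mp habE)
      by_cases hmD : m ∈ D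
      · have := hD.eq m hmD
        rw [hm] at this
        rcases Sym2.eq_iff.mp this with ⟨h1, h2⟩ | ⟨h1, h2⟩
        · rw [h2]; exact (hmemA m hmD).2
        · rw [h2]; exact (hmemA m hmD).1
      · exact absurd ha (hcon m hmD a (by rw [hm]; exact Sym2.mem_mk_left a b))
    have hwalk : ∀ (a b : Vtx d), (bondGraph d E).Walk a b → a ∈ A → b ∈ A := by
      intro a b wlk
      induction wlk with
      | nil => exact id
      | cons h _ ih => intro ha; exact ih (hclosed _ _ ha h)
    obtain ⟨⟨x, y⟩, hxy⟩ := Quot.exists_rep (σ i₀)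
    have hσx : σ i₀ = s(x, y) := hxy.symm
    have hmemE : σ i₀ ∈ E := Finset.mem_image_of_mem σ (Finset.mem_univ i₀)
    have hadj : G.Adj x y := by
      have h1 := hE.1 (Finset.mem_coe.mpr hmemE)
      rw [hσx] at h1
      exact (SimpleGraph.mem_edgeSet G).mp h1
    have hadjB : (bondGraph d E).Adj x y := by
      rw [bondGraph, SimpleGraph.fromEdgeSet_adj]
      exact ⟨by rw [← hσx]; exact Finset.mem_coe.mpr hmemE, hadj.ne⟩
    have hx_supp : x ∈ (bondGraph d E).support := ⟨y, hadjB⟩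
    have h0_supp : (0 : Vtx d) ∈ (bondGraph d E).support := hE.2.2 ⟨σ i₀, hmemE⟩
    have hxA : x ∈ A := by
      by_cases h0x : (0 : Vtx d) = x
      · rw [← h0x]; exact Set.mem_insert _ _
      · obtain ⟨wlk⟩ := hE.2.1 h0_supp hx_supp h0x
        exact hwalk _ _ wlk (Set.mem_insert _ _)
    exact hcon i₀ hi₀ x (by rw [hσx]; exact Sym2.mem_mk_left x y) hxA
  obtain ⟨i₁, hi₁, x, hx_mem, hxA⟩ := key
  set y := Sym2.Mem.other hx_mem with hydef
  have hσ1 : σ i₁ = s(x, y) := (Sym2.other_spec hx_mem).symm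
  have hpar : ∃ v : Fin (n+1),
      vtx (Function.update ex i₁ y) v = x ∧ (v = 0 ∨ ∃ j ∈ D, v = j.succ) := by
    rcases Set.mem_insert_iff.mp hxA with h0 | ⟨j, hjD, hjx⟩
    · exact ⟨0, by rw [vtx_zero, h0], Or.inl rfl⟩
    · have hjD' : j ∈ D := hjD
      have hji : j ≠ i₁ := fun h => hi₁ (h ▸ hjD')
      refine ⟨j.succ, ?_, Or.inr ⟨j, hjD', rfl⟩⟩
      rw [vtx_succ, Function.update_of_ne hji]
      exact hjx
  obtain ⟨v, hv1, hv2⟩ := hpar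
  set q' := Function.update q i₁.succ v with hq'def
  set en' := Function.update en i₁ x with hen'def
  set ex' := Function.update ex i₁ y with hex'def
  -- stability of old paths
  have hP : ∀ u : Fin (n+1), (u = 0 ∨ ∃ m ∈ D, u = m.succ) →
      (q u = 0 ∨ ∃ m ∈ D, q u = m.succ) := by
    rintro u (rfl | ⟨m, hm, rfl⟩)
    · rw [hD.root]; exact Or.inl rfl
    · exact hD.par m hm
  have hagree : ∀ u : Fin (n+1), (u = 0 ∨ ∃ m ∈ D, u = m.succ) → q' u = q u := by
    rintro u (rfl | ⟨m, hm, rfl⟩)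
    · exact Function.update_of_ne (Fin.succ_ne_zero i₁).symm _ _
    · exact Function.update_of_ne
        (fun h => by cases Fin.succ_injective n h; exact hi₁ hm) _ _
  have hstab := iterate_stable q q' _ hP hagree
  have hq'root : q' 0 = 0 := by
    rw [hq'def, Function.update_of_ne (Fin.succ_ne_zero i₁).symm, hD.root]
  refine ⟨i₁, hi₁, q', en', ex', ?_⟩
  constructor
  · -- eq
    intro i hi
    rcases Finset.mem_insert.mp hi with rfl | hiD
    · rw [hσ1, hen'def, hex'def, Function.update_self, Function.update_self]
    · have hii : i ≠ i₁ := fun h => hi₁ (h ▸ hiD)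
      rw [hen'def, hex'def, Function.update_of_ne hii, Function.update_of_ne hii]
      exact hD.eq i hiD
  · -- ent
    intro i hi
    rcases Finset.mem_insert.mp hi with rfl | hiD
    · rw [hen'def, Function.update_self, hq'def, Function.update_self, ← hv1]
    · have hii : i ≠ i₁ := fun h => hi₁ (h ▸ hiD)
      have hisucc : i.succ ≠ i₁.succ := fun h => hii (Fin.succ_injective n h)
      rw [hen'def, Function.update_of_ne hii, hq'def, Function.update_of_ne hisucc]
      rw [hD.ent i hiD]
      rcases hD.par i hiD with h0 | ⟨j, hj, hjs⟩
      · rw [h0, vtx_zero, vtx_zero]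
      · have hji : j ≠ i₁ := fun h => hi₁ (h ▸ hj)
        rw [hjs, vtx_succ, vtx_succ, hex'def, Function.update_of_ne hji]
  · -- par
    intro i hi
    rcases Finset.mem_insert.mp hi with rfl | hiD
    · rw [hq'def, Function.update_self]
      rcases hv2 with h0 | ⟨j, hj, hjs⟩
      · exact Or.inl h0
      · exact Or.inr ⟨j, Finset.mem_insert_of_mem hj, hjs⟩
    · have hii : i ≠ i₁ := fun h => hi₁ (h ▸ hiD)
      have hisucc : i.succ ≠ i₁.succ := fun h => hii (Fin.succ_injective n h)
      rw [hq'def, Function.update_of_ne hisucc]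
      rcases hD.par i hiD with h0 | ⟨j, hj, hjs⟩
      · exact Or.inl h0
      · exact Or.inr ⟨j, Finset.mem_insert_of_mem hj, hjs⟩
  · -- root
    exact hq'root
  · -- junk
    intro i hi
    have hii : i ≠ i₁ := fun h => hi (h ▸ Finset.mem_insert_self i₁ D)
    have hiD : i ∉ D := fun h => hi (Finset.mem_insert_of_mem h)
    have hisucc : i.succ ≠ i₁.succ := fun h => hii (Fin.succ_injective n h)
    rw [hq'def, Function.update_of_ne hisucc]
    exact hD.junk i hiD
  · -- reach
    intro i hi
    rcases Finset.mem_insert.mp hi with rfl | hiD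
    · rcases hv2 with h0 | ⟨j, hj, hjs⟩
      · refine ⟨2, ?_⟩
        rw [show (2 : ℕ) = 1 + 1 by rfl, Function.iterate_add_apply]
        simp only [Function.iterate_one]
        rw [hq'def, Function.update_self, ← hq'def, h0, hq'root]
      · obtain ⟨k, hk⟩ := hD.reach j hj
        refine ⟨k + 1, ?_⟩
        rw [Function.iterate_succ_apply, hq'def, Function.update_self, ← hq'def, hjs]
        rw [(hstab k j.succ (Or.inr ⟨j, hj, rfl⟩)).1]
        exact hk
    · obtain ⟨k, hk⟩ := hD.reach i hiD
      refine ⟨k, ?_⟩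
      rw [(hstab k i.succ (Or.inr ⟨i, hiD, rfl⟩)).1]
      exact hk

end AnimalProof



namespace AnimalProof

variable {d L n : ℕ}

lemma goodOn_empty (σ : Fin n → Sym2 (Vtx d)) :
    GoodOn σ ∅ (fun _ => 0) (fun _ => 0) (fun _ => 0) where
  eq := fun i hi => absurd hi (Finset.notMem_empty i)
  ent := fun i hi => absurd hi (Finset.notMem_empty i)
  par := fun i hi => absurd hi (Finset.notMem_empty i)
  root := rfl
  junk := fun _ _ => rfl
  reach := fun i hi => absurd hi (Finset.notMem_empty i)

lemma exists_good_tuple {σ : Fin n → Sym2 (Vtx d)} {G : SimpleGraph (Vtx d)}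
    (hE : IsLatticeAnimal d G (Finset.image σ Finset.univ)) :
    ∃ t : (Fin (n+1) → Fin (n+1)) × (Fin n → Vtx d) × (Fin n → Vtx d),
      GoodOn σ Finset.univ t.1 t.2.1 t.2.2 := by
  classical
  suffices H : ∀ c (D : Finset (Fin n)), Dᶜ.card = c →
      (∃ q en ex, GoodOn σ D q en ex) →
      ∃ t : (Fin (n+1) → Fin (n+1)) × (Fin n → Vtx d) × (Fin n → Vtx d),
        GoodOn σ Finset.univ t.1 t.2.1 t.2.2 by
    exact H _ ∅ rfl ⟨_, _, _, goodOn_empty σ⟩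
  intro c
  induction c with
  | zero =>
    rintro D hc ⟨q, en, ex, hD⟩
    have hDu : D = Finset.univ := by
      have := Finset.card_eq_zero.mp hc
      rwa [Finset.compl_eq_empty_iff] at this
    exact ⟨(q, en, ex), hDu ▸ hD⟩
  | succ c ih =>
    rintro D hc ⟨q, en, ex, hD⟩
    have hne : D ≠ Finset.univ := by
      rintro rfl
      simp at hc
    obtain ⟨i₁, hi₁, q', en', ex', h'⟩ := extend hE hD hne
    refine ih (insert i₁ D) ?_ ⟨q', en', ex', h'⟩
    rw [Finset.compl_insert, Finset.card_erase_of_mem (Finset.mem_compl.mpr hi₁), hc]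
    omega

lemma goodOn_isTree {σ : Fin n → Sym2 (Vtx d)} {q : Fin (n+1) → Fin (n+1)}
    {en ex : Fin n → Vtx d} (h : GoodOn σ Finset.univ q en ex) : IsTree q := by
  refine ⟨h.root, fun v => ?_⟩
  refine Fin.cases ⟨0, rfl⟩ (fun i => h.reach i (Finset.mem_univ i)) v

lemma goodOn_sigma_eq {σ σ' : Fin n → Sym2 (Vtx d)} {q : Fin (n+1) → Fin (n+1)}
    {en ex en' ex' : Fin n → Vtx d}
    (h1 : GoodOn σ Finset.univ q en ex) (h2 : GoodOn σ' Finset.univ q en' ex')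
    (hs : ∀ i, ex i - en i = ex' i - en' i) : σ = σ' := by
  have hq : ∀ v, ∃ k, q^[k] v = 0 := (goodOn_isTree h1).2
  have hvtx : ∀ v, vtx ex v = vtx ex' v := by
    suffices H : ∀ m, ∀ v, dep hq v = m → vtx ex v = vtx ex' v from fun v => H _ v rfl
    intro m
    induction m using Nat.strong_induction_on with
    | _ m ih =>
      intro v hm
      induction v using Fin.cases with
      | zero => rfl
      | succ i =>
        have hne : (i.succ : Fin (n+1)) ≠ 0 := Fin.succ_ne_zero i
        have hdep := dep_apply hq hne
        have IH := ih (dep hq (q i.succ)) (by omega) (q i.succ) rfl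
        have hen : en i = en' i := by
          rw [h1.ent i (Finset.mem_univ i), h2.ent i (Finset.mem_univ i), IH]
        have h4 := hs i
        rw [hen] at h4
        have hex : ex i = ex' i := sub_left_inj.mp h4
        rw [vtx_succ, vtx_succ, hex]
  funext i
  have hex : ex i = ex' i := by
    rw [← vtx_succ ex i, ← vtx_succ ex' i, hvtx]
  have hen : en i = en' i := by
    rw [h1.ent i (Finset.mem_univ i), h2.ent i (Finset.mem_univ i), hvtx]
  rw [h1.eq i (Finset.mem_univ i), h2.eq i (Finset.mem_univ i), hen, hex]

/-- The set of possible steps of a bond in the spread-out graph. -/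
def stepSet (d L : ℕ) : Set (Vtx d) := {x | x ≠ 0 ∧ ∀ i, |x i| ≤ (L : ℤ)}

def boxSet (d L : ℕ) : Set (Vtx d) :=
  Set.pi Set.univ (fun _ : Fin d => Set.Icc (-(L : ℤ)) (L : ℤ))

lemma boxSet_finite : (boxSet d L).Finite :=
  Set.Finite.pi (fun _ => Set.finite_Icc _ _)

lemma zero_mem_boxSet : (0 : Vtx d) ∈ boxSet d L := by
  intro i _
  constructor
  · simp
  · simp

lemma card_boxSet : Nat.card (boxSet d L) = (2 * L + 1) ^ d := by
  have he : Nat.card (boxSet d L)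
      = Nat.card (∀ _ : Fin d, Set.Icc (-(L:ℤ)) (L:ℤ)) :=
    Nat.card_congr (Equiv.Set.univPi _)
  rw [he, Nat.card_pi]
  have hic : ∀ i : Fin d, Nat.card (Set.Icc (-(L:ℤ)) (L:ℤ)) = 2 * L + 1 := by
    intro i
    rw [Nat.card_coe_set_eq, ← Finset.coe_Icc, Set.ncard_coe_finset, Int.card_Icc]
    omega
  rw [Finset.prod_congr rfl (fun i _ => hic i), Finset.prod_const, Finset.card_univ,
    Fintype.card_fin]

lemma stepSet_eq : stepSet d L = boxSet d L \ {0} := by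
  ext x
  simp only [stepSet, boxSet, Set.mem_diff, Set.mem_singleton_iff, Set.mem_setOf_eq,
    Set.mem_pi, Set.mem_univ, forall_true_left, Set.mem_Icc, ← abs_le]
  tauto

lemma stepSet_finite : (stepSet d L).Finite := by
  rw [stepSet_eq]
  exact (boxSet_finite).diff

lemma card_stepSet : Nat.card (stepSet d L) = (2 * L + 1) ^ d - 1 := by
  rw [Nat.card_coe_set_eq, stepSet_eq,
    Set.ncard_diff_singleton_of_mem zero_mem_boxSet,
    ← Nat.card_coe_set_eq, card_boxSet]

end AnimalProof


namespace AnimalProof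

variable {d L n : ℕ}

/-- Enumerated animals: injections of `Fin n` onto the bond set of an animal. -/
def WSet (d L n : ℕ) : Set (Fin n → Sym2 (Vtx d)) :=
  {σ | Function.Injective σ ∧
    IsLatticeAnimal d (spreadGraph d L) (Finset.image σ Finset.univ)}

noncomputable def encTuple (x : WSet d L n) :
    (Fin (n+1) → Fin (n+1)) × (Fin n → Vtx d) × (Fin n → Vtx d) :=
  (exists_good_tuple x.2.2).choose

lemma encTuple_spec (x : WSet d L n) :
    GoodOn x.1 Finset.univ (encTuple x).1 (encTuple x).2.1 (encTuple x).2.2 :=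
  (exists_good_tuple x.2.2).choose_spec

lemma enc_step_mem (x : WSet d L n) (i : Fin n) :
    (encTuple x).2.2 i - (encTuple x).2.1 i ∈ stepSet d L := by
  have heq := (encTuple_spec x).eq i (Finset.mem_univ i)
  have hedge : x.1 i ∈ (spreadGraph d L).edgeSet :=
    x.2.2.1 (Finset.mem_coe.mpr (Finset.mem_image_of_mem _ (Finset.mem_univ i)))
  rw [heq] at hedge
  have hadj := (SimpleGraph.mem_edgeSet _).mp hedge
  obtain ⟨hne, hb⟩ := hadj
  constructor
  · exact sub_ne_zero_of_ne (Ne.symm hne)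
  · intro k
    have := hb k
    have h2 : |((encTuple x).2.2 i - (encTuple x).2.1 i) k|
        = |(encTuple x).2.1 i k - (encTuple x).2.2 i k| := by
      rw [Pi.sub_apply, abs_sub_comm]
    rw [h2]
    exact this

noncomputable def enc (x : WSet d L n) :
    {p : Fin (n+1) → Fin (n+1) // IsTree p} × (Fin n → (stepSet d L)) :=
  (⟨(encTuple x).1, goodOn_isTree (encTuple_spec x)⟩,
   fun i => ⟨(encTuple x).2.2 i - (encTuple x).2.1 i, enc_step_mem x i⟩)

lemma enc_injective : Function.Injective (enc (d := d) (L := L) (n := n)) := by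
  intro x y h
  have hq : (encTuple x).1 = (encTuple y).1 := congrArg (fun z => z.1.1) h
  have hs : ∀ i, (encTuple x).2.2 i - (encTuple x).2.1 i
      = (encTuple y).2.2 i - (encTuple y).2.1 i := by
    intro i
    have := congrArg (fun z => (z.2 i).1) h
    exact this
  have h1 := encTuple_spec x
  have h2 := encTuple_spec y
  rw [hq] at h1
  exact Subtype.ext (goodOn_sigma_eq h1 h2 hs)

lemma card_WSet : Nat.card (WSet d L n) ≤ (n+1)^(n-1) * ((2*L+1)^d - 1)^n := by
  haveI : Finite (stepSet d L) := stepSet_finite.to_subtype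
  have h := Nat.card_le_card_of_injective _ (enc_injective (d := d) (L := L) (n := n))
  rw [Nat.card_prod] at h
  have hfun : Nat.card (Fin n → (stepSet d L)) = ((2*L+1)^d - 1)^n := by
    rw [Nat.card_fun, card_stepSet, Nat.card_eq_fintype_card, Fintype.card_fin]
  rw [hfun] at h
  refine h.trans ?_
  exact Nat.mul_le_mul_right _ Joyal.card_trees

/-- The animal set, as a subtype. -/
def ASet (d L n : ℕ) : Set (Finset (Sym2 (Vtx d))) :=
  {E | E.card = n ∧ IsLatticeAnimal d (spreadGraph d L) E}

lemma image_perm_enc {E : Finset (Sym2 (Vtx d))} (hc : E.card = n) (π : Equiv.Perm (Fin n)) :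
    Finset.image (fun i => ((Finset.equivFinOfCardEq hc).symm (π i) : Sym2 (Vtx d)))
      Finset.univ = E := by
  ext a
  simp only [Finset.mem_image, Finset.mem_univ, true_and]
  constructor
  · rintro ⟨i, rfl⟩
    exact ((Finset.equivFinOfCardEq hc).symm (π i)).2
  · intro ha
    refine ⟨π.symm ((Finset.equivFinOfCardEq hc) ⟨a, ha⟩), ?_⟩
    rw [Equiv.apply_symm_apply, Equiv.symm_apply_apply]

noncomputable def pairEnc (x : (ASet d L n) × Equiv.Perm (Fin n)) : WSet d L n := by
  refine ⟨fun i => ((Finset.equivFinOfCardEq x.1.2.1).symm (x.2 i) : Sym2 (Vtx d)), ?_, ?_⟩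
  · intro i j hij
    exact x.2.injective ((Finset.equivFinOfCardEq x.1.2.1).symm.injective (Subtype.ext hij))
  · rw [image_perm_enc x.1.2.1 x.2]
    exact x.1.2.2

lemma pairEnc_injective : Function.Injective (pairEnc (d := d) (L := L) (n := n)) := by
  rintro ⟨⟨E, hE⟩, π⟩ ⟨⟨E', hE'⟩, π'⟩ h
  have hσ : (fun i => ((Finset.equivFinOfCardEq hE.1).symm (π i) : Sym2 (Vtx d)))
      = (fun i => ((Finset.equivFinOfCardEq hE'.1).symm (π' i) : Sym2 (Vtx d))) :=
    congrArg Subtype.val h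
  have hEE : E = E' := by
    rw [← image_perm_enc hE.1 π, ← image_perm_enc hE'.1 π', hσ]
  subst hEE
  obtain rfl : hE = hE' := rfl
  have hππ : π = π' := by
    ext i
    have h2 : (Finset.equivFinOfCardEq hE.1).symm (π i)
        = (Finset.equivFinOfCardEq hE.1).symm (π' i) := Subtype.ext (congrFun hσ i)
    exact congrArg Fin.val ((Finset.equivFinOfCardEq hE.1).symm.injective h2)
  rw [hππ]

lemma animalCount_mul_factorial_le :
    animalCount d (spreadGraph d L) n * n.factorial ≤ Nat.card (WSet d L n) := by
  haveI : Finite (stepSet d L) := stepSet_finite.to_subtype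
  haveI : Finite (WSet d L n) :=
    Finite.of_injective _ (enc_injective (d := d) (L := L) (n := n))
  have h := Nat.card_le_card_of_injective _
    (pairEnc_injective (d := d) (L := L) (n := n))
  rw [Nat.card_prod, Nat.card_eq_fintype_card (α := Equiv.Perm (Fin n)),
    Fintype.card_perm, Fintype.card_fin] at h
  have hA : Nat.card (ASet d L n) = animalCount d (spreadGraph d L) n := by
    rw [animalCount, ← Nat.card_coe_set_eq]
    rfl
  rwa [hA] at h

lemma main_nat_bound :
    animalCount d (spreadGraph d L) n * n.factorial
      ≤ ((2*L+1)^d - 1)^n * (n+1)^(n-1) := by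
  refine (animalCount_mul_factorial_le).trans ?_
  refine (card_WSet).trans ?_
  rw [Nat.mul_comm]

end AnimalProof

/-- For the spread-out model on `ℤ^d` in every dimension `d ≥ 1`, every `L ≥ 1`, and
every `n ≥ 0`, the number of lattice animals satisfies `a_n(d,L) ≤ K^n (n+1)^{n-1}/n!`,
where `K = (2L+1)^d - 1`. -/
theorem animal_count_upper_bound_spread_out (d L : ℕ) (hd : 1 ≤ d) (hL : 1 ≤ L) (n : ℕ) :
    (animalCount d (spreadGraph d L) n : ℝ)
      ≤ ((((2 * L + 1) ^ d - 1 : ℕ) : ℝ)) ^ n * ((n + 1 : ℝ) ^ (n - 1) / (n.factorial : ℝ)) := by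
  have key := AnimalProof.main_nat_bound (d := d) (L := L) (n := n)
  have hfact : (0:ℝ) < (n.factorial : ℝ) := by exact_mod_cast n.factorial_pos
  rw [← mul_div_assoc, le_div_iff₀ hfact]
  exact_mod_cast key
end

section
/- For every n ≥ 0, the sum over rooted plane trees T with exactly n edges of the product over vertices i of T of 1/ξ_i!, where ξ_i is the number of children of vertex i, equals (n+1)^{n−1}/n!. -/
open Filter

/-- Rooted plane trees: a node carrying an ordered (finite) list of subtrees. -/
inductive PlaneTree : Type where
  | node : List PlaneTree → PlaneTree

namespace PlaneTree

/-- The number of edges of a rooted plane tree. -/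
def edges : PlaneTree → ℕ
  | node ts => ts.length + (ts.attach.map (fun t => edges t.1)).sum
decreasing_by
  have h1 := List.sizeOf_lt_of_mem t.2
  simp only [node.sizeOf_spec]
  omega

/-- The weight `∏_{i ∈ T} 1/ξ_i!` of a rooted plane tree, where `ξ_i` is the number
of children (the forward degree) of the vertex `i`. -/
noncomputable def weight : PlaneTree → ℝ
  | node ts => ((ts.length).factorial : ℝ)⁻¹ * (ts.attach.map (fun t => weight t.1)).prod
decreasing_by
  have h1 := List.sizeOf_lt_of_mem t.2
  simp only [node.sizeOf_spec]
  omega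

end PlaneTree

open Finset Polynomial


theorem alt_pow : ∀ j n : ℕ, j < n →
    ∑ k ∈ range (n+1), (-1:ℝ)^k * (n.choose k : ℝ) * (k:ℝ)^j = 0 := by
  intro j
  induction j using Nat.strong_induction_on with
  | _ j ih =>
    intro n hj
    match j with
    | 0 =>
      have h := @Int.alternating_sum_range_choose n
      rw [if_neg (by omega : n ≠ 0)] at h
      have h2 : ((∑ i ∈ range (n+1), (-1:ℤ)^i * (n.choose i) : ℤ) : ℝ) = 0 := by rw [h]; norm_num
      push_cast at h2
      simpa using h2
    | j+1 =>
      obtain ⟨m, rfl⟩ : ∃ m, n = m + 1 := ⟨n - 1, by omega⟩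
      rw [Finset.sum_range_succ']
      simp only [Nat.cast_zero, zero_pow (by omega : j+1 ≠ 0), mul_zero, add_zero]
      have key : ∀ i ∈ range (m+1), (-1:ℝ)^(i+1) * ((m+1).choose (i+1) : ℝ) * ((i+1:ℕ):ℝ)^(j+1)
          = (-((m:ℝ)+1)) * ((-1:ℝ)^i * ((m.choose i) : ℝ) * (((i:ℝ)+1))^j) := by
        intro i _
        have hc : ((m+1).choose (i+1) : ℝ) * ((i:ℝ)+1) = ((m:ℝ)+1) * (m.choose i : ℝ) := by
          have h3 : (m+1) * m.choose i = (m+1).choose (i+1) * (i+1) := Nat.add_one_mul_choose_eq m i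
          exact_mod_cast h3.symm
        push_cast
        calc (-1:ℝ)^(i+1) * ((m+1).choose (i+1) : ℝ) * ((i:ℝ)+1)^(j+1)
            = -((-1:ℝ)^i * (((m+1).choose (i+1) : ℝ) * ((i:ℝ)+1)) * ((i:ℝ)+1)^j) := by ring
          _ = -((-1:ℝ)^i * (((m:ℝ)+1) * (m.choose i : ℝ)) * ((i:ℝ)+1)^j) := by rw [hc]
          _ = (-((m:ℝ)+1)) * ((-1:ℝ)^i * ((m.choose i) : ℝ) * (((i:ℝ)+1))^j) := by ring
      rw [Finset.sum_congr rfl key, ← Finset.mul_sum]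
      have expand : ∀ i ∈ range (m+1), (-1:ℝ)^i * ((m.choose i) : ℝ) * (((i:ℝ)+1))^j
          = ∑ t ∈ range (j+1), (j.choose t : ℝ) * ((-1:ℝ)^i * ((m.choose i) : ℝ) * (i:ℝ)^t) := by
        intro i _
        rw [add_pow]
        rw [Finset.mul_sum]
        refine Finset.sum_congr rfl fun t _ => by ring
      rw [Finset.sum_congr rfl expand, Finset.sum_comm]
      have z : ∀ t ∈ range (j+1), ∑ i ∈ range (m+1),
          (j.choose t : ℝ) * ((-1:ℝ)^i * ((m.choose i) : ℝ) * (i:ℝ)^t) = 0 := by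
        intro t ht
        simp only [Finset.mem_range] at ht
        rw [← Finset.mul_sum, ih t ht m (by omega), mul_zero]
      rw [Finset.sum_congr rfl z, Finset.sum_const_zero, mul_zero]

theorem alt_shift (d n : ℕ) (h : d < n) :
    ∑ k ∈ range (n+1), (-1:ℝ)^k * (n.choose k : ℝ) * ((k:ℝ)+1)^d = 0 := by
  have expand : ∀ k ∈ range (n+1), (-1:ℝ)^k * (n.choose k : ℝ) * ((k:ℝ)+1)^d
      = ∑ t ∈ range (d+1), (d.choose t : ℝ) * ((-1:ℝ)^k * ((n.choose k) : ℝ) * (k:ℝ)^t) := by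
    intro k _
    rw [add_pow, Finset.mul_sum]
    refine Finset.sum_congr rfl fun t _ => by ring
  rw [Finset.sum_congr rfl expand, Finset.sum_comm]
  refine Finset.sum_eq_zero fun t ht => ?_
  rw [← Finset.mul_sum, alt_pow t n (by simp at ht; omega), mul_zero]


theorem poly_eq_of_deriv {P Q : Polynomial ℝ} (a : ℝ)
    (h : derivative P = derivative Q) (h2 : P.eval a = Q.eval a) : P = Q := by
  have hd : derivative (P - Q) = 0 := by rw [derivative_sub, h, sub_self]
  have hC := eq_C_of_derivative_eq_zero hd
  have e : (P - Q).eval a = 0 := by simp [h2]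
  rw [hC] at e
  simp only [eval_C] at e
  have h0 : P - Q = 0 := by rw [hC, e, map_zero]
  exact sub_eq_zero.mp h0

noncomputable def Qp (n : ℕ) : Polynomial ℝ :=
  ∑ k ∈ range (n+1), C ((n.choose k : ℝ) * ((k:ℝ)+1)^(k-1)) * (X + C ((n-k : ℕ) : ℝ))^(n-k)

theorem pow_combine (n k : ℕ) (hk : k ≤ n + 1) :
    ((k:ℝ)+1)^(k-1) * ((k:ℝ)+1)^(n+1-k) = ((k:ℝ)+1)^n := by
  match k with
  | 0 => norm_num
  | k+1 =>
    rw [← pow_add]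
    congr 1
    omega

theorem Qp_eq : ∀ n : ℕ, Qp n = (X + C ((n:ℝ)+1))^n := by
  intro n
  induction n with
  | zero => simp [Qp]
  | succ n ih =>
    have hcomp : (Qp n).comp (X + C 1) = (X + C ((n:ℝ)+2))^n := by
      rw [ih, pow_comp, add_comp, X_comp, C_comp, add_assoc, ← C_add,
        show (1:ℝ) + ((n:ℝ)+1) = (n:ℝ)+2 from by ring]
    have hcomp2 : (Qp n).comp (X + C 1)
        = ∑ k ∈ range (n+1), C ((n.choose k : ℝ) * ((k:ℝ)+1)^(k-1))
            * (X + C (((n-k : ℕ) : ℝ)+1))^(n-k) := by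
      simp only [Qp, Polynomial.sum_comp, mul_comp, C_comp, pow_comp, add_comp, X_comp]
      refine Finset.sum_congr rfl fun k _ => ?_
      congr 2
      rw [add_assoc, ← C_add, add_comm (1:ℝ)]
    apply poly_eq_of_deriv (-((n:ℝ)+2))
    · rw [derivative_pow]
      simp only [derivative_add, derivative_X, derivative_C, add_zero, mul_one]
      rw [Qp, derivative_sum]
      have hterm : ∀ k ∈ range (n+2),
          derivative (C (((n+1).choose k : ℝ) * ((k:ℝ)+1)^(k-1)) * (X + C ((n+1-k : ℕ) : ℝ))^(n+1-k))
          = C (((n:ℝ)+1)) * (if k ≤ n then C ((n.choose k : ℝ) * ((k:ℝ)+1)^(k-1))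
              * (X + C (((n-k : ℕ) : ℝ)+1))^(n-k) else 0) := by
        intro k hk
        simp only [mem_range] at hk
        rw [derivative_C_mul, derivative_pow]
        simp only [derivative_add, derivative_X, derivative_C, add_zero, mul_one]
        by_cases hkn : k ≤ n
        · rw [if_pos hkn]
          have e1 : n + 1 - k = (n - k) + 1 := by omega
          rw [e1]
          have e2 : n - k + 1 - 1 = n - k := by omega
          rw [e2]
          have hcast : (((n - k) + 1 : ℕ) : ℝ) = ((n-k : ℕ) : ℝ) + 1 := by push_cast; ring
          rw [hcast]
          have hco : (((n+1).choose k : ℝ)) * (((n-k:ℕ):ℝ) + 1) = ((n:ℝ)+1) * (n.choose k : ℝ) := by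
            have h3 : n.choose k * (n + 1) = (n + 1).choose k * (n + 1 - k) := Nat.choose_mul_succ_eq n k
            rw [e1] at h3
            have h4 : ((n.choose k * (n + 1) : ℕ) : ℝ) = (((n + 1).choose k * ((n - k) + 1) : ℕ) : ℝ) := by
              rw [h3]
            push_cast at h4
            linarith [h4]
          rw [← mul_assoc, ← mul_assoc, ← C_mul, ← C_mul]
          congr 1
          apply congrArg C
          have : (((n+1).choose k : ℝ) * ((k:ℝ)+1)^(k-1)) * (((n-k:ℕ):ℝ) + 1)
              = ((((n+1)).choose k : ℝ) * (((n-k:ℕ):ℝ) + 1)) * ((k:ℝ)+1)^(k-1) := by ring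
          rw [this, hco]
          ring
        · rw [if_neg hkn]
          have : n + 1 - k = 0 := by omega
          rw [this]
          simp
      rw [Finset.sum_congr rfl hterm, ← Finset.mul_sum]
      rw [Finset.sum_range_succ, if_neg (by omega : ¬ n + 1 ≤ n), add_zero]
      have : ∑ k ∈ range (n+1), (if k ≤ n then C ((n.choose k : ℝ) * ((k:ℝ)+1)^(k-1))
              * (X + C (((n-k : ℕ) : ℝ)+1))^(n-k) else 0)
          = (Qp n).comp (X + C 1) := by
        rw [hcomp2]
        refine Finset.sum_congr rfl fun k hk => ?_
        rw [if_pos (by simp at hk; omega)]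
      rw [this, hcomp]
      simp only [Nat.add_sub_cancel]
      push_cast
      rw [show ((n:ℝ)+1+1) = (n:ℝ)+2 from by ring]
    · rw [eval_pow]
      simp only [eval_add, eval_X, eval_C]
      have hbase : -((n:ℝ)+2) + ((n+1 : ℕ):ℝ)+1 = 0 := by push_cast; ring
      have : (-((n:ℝ)+2) + (((n+1 : ℕ)):ℝ) + 1) ^ (n+1) = 0 := by
        rw [hbase]; exact zero_pow (by omega)
      rw [show (-((n:ℝ)+2) + (((n+1 : ℕ)):ℝ) + 1) = -((n:ℝ)+2) + ((((n+1 : ℕ)):ℝ) + 1) from by ring] at this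
      rw [Qp]
      rw [eval_finset_sum]
      simp only [eval_mul, eval_pow, eval_add, eval_X, eval_C]
      have hterm : ∀ k ∈ range (n+2),
          ((n+1).choose k : ℝ) * ((k:ℝ)+1)^(k-1) * (-((n:ℝ)+2) + ((n+1-k : ℕ):ℝ))^(n+1-k)
          = (-1:ℝ)^(n+1) * ((-1:ℝ)^k * (((n+1).choose k : ℝ)) * ((k:ℝ)+1)^n) := by
        intro k hk
        simp only [mem_range] at hk
        have hc : ((n+1-k : ℕ):ℝ) = ((n:ℝ)+1) - (k:ℝ) := by
          have hkle : k ≤ n + 1 := by omega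
          push_cast [hkle]
          ring
        have hb : -((n:ℝ)+2) + ((n+1-k : ℕ):ℝ) = -(((k:ℝ)+1)) := by rw [hc]; ring
        rw [hb, neg_pow]
        have hsgn : (-1:ℝ)^(n+1-k) = (-1:ℝ)^(n+1) * (-1:ℝ)^k := by
          rw [← pow_add]
          have h2 : n+1+k = (n+1-k) + 2*k := by omega
          rw [h2, pow_add, pow_mul]
          norm_num
        rw [hsgn]
        have hpc := pow_combine n k (by omega)
        linear_combination ((-1:ℝ)^(n+1) * (-1:ℝ)^k * (((n+1).choose k : ℝ))) * hpc
      rw [Finset.sum_congr rfl hterm, ← Finset.mul_sum]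
      have halt := alt_shift n (n+1) (by omega)
      have e2 : n + 1 + 1 = n + 2 := by omega
      rw [e2] at halt
      rw [halt, mul_zero]
      exact this.symm

theorem abelA1 (n : ℕ) (y : ℝ) :
    ∑ k ∈ range (n+1), (n.choose k : ℝ) * ((k:ℝ)+1)^(k-1) * (y + ((n-k : ℕ):ℝ))^(n-k)
      = (y + (n:ℝ) + 1)^n := by
  have := congrArg (eval y) (Qp_eq n)
  rw [Qp, eval_finset_sum, eval_pow] at this
  simp only [eval_mul, eval_pow, eval_add, eval_X, eval_C] at this
  rw [← add_assoc] at this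
  exact this


noncomputable def aw (n : ℕ) : ℝ := ((n:ℝ) + 1)^(n-1) / (n.factorial : ℝ)

noncomputable def sw (k m : ℕ) : ℝ :=
  if k = 0 then (if m = 0 then 1 else 0)
  else (k:ℝ) * ((m:ℝ)+(k:ℝ))^m / (((m:ℝ)+(k:ℝ)) * (m.factorial : ℝ))

theorem aw_nonneg (n : ℕ) : 0 ≤ aw n := by
  unfold aw
  positivity

theorem sw_nonneg (k m : ℕ) : 0 ≤ sw k m := by
  unfold sw
  split
  · split <;> norm_num
  · positivity

theorem cancel_aux (a b D : ℝ) (hD : D ≠ 0) : a * (b * D) / D = a * b := by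
  field_simp

theorem aw_alt (m : ℕ) : aw m = ((m:ℝ)+1)^m / (((m:ℝ)+1) * (m.factorial : ℝ)) := by
  unfold aw
  match m with
  | 0 => norm_num
  | q+1 =>
    have h1 : ((q+1:ℕ):ℝ) + 1 ≠ 0 := by push_cast; positivity
    have h2 : ((q+1).factorial : ℝ) ≠ 0 := by positivity
    rw [div_eq_div_iff (by positivity) (by positivity)]
    have e : (q + 1) - 1 = q := by omega
    rw [e]
    rw [show q + 1 = q + 1 from rfl, pow_succ]
    ring

/-- Abel identity, second form. -/
theorem abelA2 (m q : ℕ) (hq : 1 ≤ q) :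
    ∑ j ∈ range (m+1), (m.choose j : ℝ) * ((j:ℝ)+1)^(j-1)
        * ((q:ℝ) * ((q:ℝ)+((m-j:ℕ):ℝ))^(m-j) / ((q:ℝ)+((m-j:ℕ):ℝ)))
      = ((q:ℝ)+1) * ((q:ℝ)+(m:ℝ)+1)^m / ((q:ℝ)+(m:ℝ)+1) := by
  have hq0 : (0:ℝ) < (q:ℝ) := by exact_mod_cast hq
  match m with
  | 0 =>
    have hq' : (q:ℝ) ≠ 0 := ne_of_gt hq0
    have hq1 : (q:ℝ) + 1 ≠ 0 := by positivity
    simp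
    field_simp
  | p+1 =>
    -- split each term
    have hsplit : ∀ j ∈ range (p+2),
        ((p+1).choose j : ℝ) * ((j:ℝ)+1)^(j-1)
          * ((q:ℝ) * ((q:ℝ)+((p+1-j:ℕ):ℝ))^(p+1-j) / ((q:ℝ)+((p+1-j:ℕ):ℝ)))
        = ((p+1).choose j : ℝ) * ((j:ℝ)+1)^(j-1) * ((q:ℝ)+((p+1-j:ℕ):ℝ))^(p+1-j)
          - ((p+1).choose j : ℝ) * ((j:ℝ)+1)^(j-1) * ((p+1-j:ℕ):ℝ)
              * ((q:ℝ)+((p+1-j:ℕ):ℝ))^(p+1-j) / ((q:ℝ)+((p+1-j:ℕ):ℝ)) := by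
      intro j hj
      have hpos : (0:ℝ) < (q:ℝ)+((p+1-j:ℕ):ℝ) := by positivity
      field_simp
      ring
    rw [Finset.sum_congr rfl hsplit, Finset.sum_sub_distrib]
    rw [abelA1 (p+1) (q:ℝ)]
    -- second sum
    have h2 : ∑ j ∈ range (p+2), ((p+1).choose j : ℝ) * ((j:ℝ)+1)^(j-1) * ((p+1-j:ℕ):ℝ)
              * ((q:ℝ)+((p+1-j:ℕ):ℝ))^(p+1-j) / ((q:ℝ)+((p+1-j:ℕ):ℝ))
        = ((p:ℝ)+1) * ((q:ℝ)+(p:ℝ)+2)^p := by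
      rw [Finset.sum_range_succ]
      simp only [Nat.sub_self, Nat.cast_zero, mul_zero, zero_mul, zero_div, add_zero]
      have hterm : ∀ j ∈ range (p+1),
          ((p+1).choose j : ℝ) * ((j:ℝ)+1)^(j-1) * ((p+1-j:ℕ):ℝ)
              * ((q:ℝ)+((p+1-j:ℕ):ℝ))^(p+1-j) / ((q:ℝ)+((p+1-j:ℕ):ℝ))
          = ((p:ℝ)+1) * ((p.choose j : ℝ) * ((j:ℝ)+1)^(j-1)
              * (((q:ℝ)+1)+((p-j:ℕ):ℝ))^(p-j)) := by
        intro j hj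
        simp only [mem_range] at hj
        have hj' : j ≤ p := by omega
        have e1 : p + 1 - j = (p - j) + 1 := by omega
        have hc1 : ((p+1-j:ℕ):ℝ) = ((p-j:ℕ):ℝ) + 1 := by rw [e1]; push_cast; ring
        have hco : (p.choose j : ℝ) * (((p:ℝ))+1) = ((p+1).choose j : ℝ) * (((p-j:ℕ):ℝ) + 1) := by
          have h3 : p.choose j * (p + 1) = (p + 1).choose j * (p + 1 - j) := Nat.choose_mul_succ_eq p j
          rw [e1] at h3
          exact_mod_cast h3
        rw [hc1, e1, pow_succ]
        have hb : ((q:ℝ) + (((p-j:ℕ):ℝ) + 1)) = ((q:ℝ)+1)+((p-j:ℕ):ℝ) := by ring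
        rw [hb]
        have hD : (((q:ℝ)+1)+((p-j:ℕ):ℝ)) ≠ 0 := by positivity
        rw [cancel_aux _ _ _ hD]
        linear_combination (-((((j:ℝ)+1)^(j-1)) * ((((q:ℝ)+1)+((p-j:ℕ):ℝ))^(p-j)))) * hco
      rw [Finset.sum_congr rfl hterm, ← Finset.mul_sum]
      congr 1
      have := abelA1 p ((q:ℝ)+1)
      rw [this]
      ring_nf
    rw [h2]
    push_cast
    have hR : ((q:ℝ)+(p:ℝ)+2) ≠ 0 := by positivity
    rw [show (q:ℝ)+((p:ℝ)+1)+1 = (q:ℝ)+(p:ℝ)+2 from by ring]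
    rw [eq_div_iff hR]
    rw [pow_succ]
    ring

theorem sw_one (m : ℕ) : sw 1 m = aw m := by
  rw [aw_alt]
  unfold sw
  norm_num

theorem sw_succ (k m : ℕ) : sw (k+1) m = ∑ j ∈ range (m+1), aw j * sw k (m - j) := by
  match k with
  | 0 =>
    rw [Finset.sum_eq_single_of_mem m (self_mem_range_succ m)]
    · rw [Nat.sub_self]
      have : sw 0 0 = 1 := by unfold sw; norm_num
      rw [this, mul_one, sw_one]
    · intro b hb hbm
      simp only [mem_range] at hb
      have : sw 0 (m - b) = 0 := by
        unfold sw
        rw [if_pos rfl, if_neg (by omega)]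
      rw [this, mul_zero]
  | q+1 =>
    have hterm : ∀ j ∈ range (m+1), aw j * sw (q+1) (m-j)
        = (m.factorial:ℝ)⁻¹ * ((m.choose j : ℝ) * ((j:ℝ)+1)^(j-1)
            * (((q+1:ℕ):ℝ) * (((q+1:ℕ):ℝ)+((m-j:ℕ):ℝ))^(m-j) / (((q+1:ℕ):ℝ)+((m-j:ℕ):ℝ)))) := by
      intro j hj
      simp only [mem_range] at hj
      have hj' : j ≤ m := by omega
      have hfac : ((m.choose j : ℕ):ℝ) * (j.factorial : ℝ) * (((m-j).factorial) : ℝ)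
          = (m.factorial : ℝ) := by exact_mod_cast Nat.choose_mul_factorial_mul_factorial hj'
      unfold aw sw
      rw [if_neg (by omega : ¬ q+1 = 0)]
      obtain ⟨u, hu⟩ : ∃ u, m - j = u := ⟨_, rfl⟩
      rw [hu] at hfac ⊢
      push_cast
      have h1 : (j.factorial : ℝ) ≠ 0 := by positivity
      have h2 : (u.factorial : ℝ) ≠ 0 := by positivity
      have h3 : (m.factorial : ℝ) ≠ 0 := by positivity
      have hB : ((u:ℝ)+((q:ℝ)+1)) ≠ 0 := by positivity
      have hB' : (((q:ℝ)+1)+(u:ℝ)) ≠ 0 := by positivity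
      have hC : ((m.choose j : ℕ):ℝ) ≠ 0 := by exact_mod_cast (Nat.choose_pos hj').ne'
      rw [← hfac]
      field_simp
      ring
    rw [Finset.sum_congr rfl hterm, ← Finset.mul_sum]
    rw [abelA2 m (q+1) (by omega)]
    unfold sw
    rw [if_neg (by omega : ¬ q+1+1 = 0)]
    have hbase : ((q+1:ℕ):ℝ)+(m:ℝ)+1 = (m:ℝ)+((q+1+1:ℕ):ℝ) := by push_cast; ring
    rw [hbase]
    have h3 : (m.factorial : ℝ) ≠ 0 := by positivity
    have h4 : (0:ℝ) < (m:ℝ)+((q+1+1:ℕ):ℝ) := by push_cast; positivity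
    push_cast
    field_simp

theorem aw_eq (n : ℕ) :
    aw n = ∑ k ∈ range (n+1), ((k.factorial : ℝ))⁻¹ * sw k (n - k) := by
  match n with
  | 0 =>
    rw [show (0:ℕ)+1 = 1 from rfl, Finset.sum_range_one]
    unfold aw sw
    norm_num
  | p+1 =>
    rw [Finset.sum_range_succ']
    have hz : sw 0 (p+1-0) = 0 := by
      unfold sw
      rw [if_pos rfl, if_neg (by omega)]
    rw [hz, mul_zero, add_zero]
    have hterm : ∀ i ∈ range (p+1), (((i+1).factorial:ℝ))⁻¹ * sw (i+1) (p+1-(i+1))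
        = ((p.choose i : ℝ) * ((p:ℝ)+1)^(p-i)) / (((p+1).factorial : ℝ)) := by
      intro i hi
      simp only [mem_range] at hi
      have hi' : i ≤ p := by omega
      have e1 : p+1-(i+1) = p-i := by omega
      rw [e1]
      unfold sw
      rw [if_neg (by omega : ¬ i+1 = 0)]
      have hbase : ((p-i:ℕ):ℝ)+((i+1:ℕ):ℝ) = (p:ℝ)+1 := by
        push_cast [hi']
        ring
      rw [hbase]
      have hfac : ((p.choose i : ℕ):ℝ) * (i.factorial : ℝ) * (((p-i).factorial) : ℝ)
          = (p.factorial : ℝ) := by exact_mod_cast Nat.choose_mul_factorial_mul_factorial hi'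
      have hfs1 : ((i+1).factorial : ℝ) = ((i:ℝ)+1) * (i.factorial : ℝ) := by
        rw [Nat.factorial_succ]; push_cast; ring
      have hfs2 : (((p+1)).factorial : ℝ) = ((p:ℝ)+1) * (p.factorial : ℝ) := by
        rw [Nat.factorial_succ]; push_cast; ring
      obtain ⟨u, hu⟩ : ∃ u, p - i = u := ⟨_, rfl⟩
      rw [hu] at hfac ⊢
      have h1 : (i.factorial : ℝ) ≠ 0 := by positivity
      have h2 : (u.factorial : ℝ) ≠ 0 := by positivity
      have h3 : (p.factorial : ℝ) ≠ 0 := by positivity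
      have h5 : ((p:ℝ)+1) ≠ 0 := by positivity
      have h6 : ((i:ℝ)+1) ≠ 0 := by positivity
      rw [hfs1, hfs2]
      push_cast
      have hC : ((p.choose i : ℕ):ℝ) ≠ 0 := by exact_mod_cast (Nat.choose_pos hi').ne'
      rw [← hfac]
      field_simp
    rw [Finset.sum_congr rfl hterm]
    rw [← Finset.sum_div]
    have hbin : ∑ i ∈ range (p+1), (p.choose i : ℝ) * ((p:ℝ)+1)^(p-i)
        = ((p:ℝ)+2)^p := by
      have := add_pow (1:ℝ) ((p:ℝ)+1) p
      simp only [one_pow, one_mul] at this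
      rw [Finset.sum_congr rfl (fun k _ => by ring : ∀ k ∈ range (p+1),
        (p.choose k : ℝ) * ((p:ℝ)+1)^(p-k) = ((p:ℝ)+1)^(p-k) * (p.choose k : ℝ))]
      rw [← this]
      ring_nf
    rw [hbin]
    unfold aw
    have e2 : p + 1 - 1 = p := by omega
    rw [e2]
    push_cast
    ring_nf

theorem sw_zero (m : ℕ) : sw 0 m = if m = 0 then 1 else 0 := by
  unfold sw
  rw [if_pos rfl]

namespace PlaneTree

theorem edges_node (l : List PlaneTree) :
    (node l).edges = l.length + (l.map edges).sum := by
  rw [edges]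
  congr 1
  rw [List.attach_map_val]

theorem weight_node (l : List PlaneTree) :
    (node l).weight = ((l.length).factorial : ℝ)⁻¹ * (l.map weight).prod := by
  rw [weight]
  congr 1
  rw [List.attach_map_val]

theorem strongInd {motive : PlaneTree → Prop}
    (h : ∀ l : List PlaneTree, (∀ t ∈ l, motive t) → motive (node l)) : ∀ t, motive t := by
  have key : ∀ n t, sizeOf t ≤ n → motive t := by
    intro n
    induction n with
    | zero =>
      intro t ht
      cases t with
      | node l => simp only [node.sizeOf_spec] at ht; omega
    | succ n ih =>
      intro t ht
      cases t with
      | node l =>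
        refine h l fun s hs => ih s ?_
        have h1 := List.sizeOf_lt_of_mem hs
        simp only [node.sizeOf_spec] at ht
        omega
  exact fun t => key (sizeOf t) t le_rfl

theorem weight_nonneg : ∀ t : PlaneTree, 0 ≤ t.weight := by
  refine strongInd fun l hl => ?_
  rw [weight_node]
  refine mul_nonneg (by positivity) (List.prod_nonneg ?_)
  intro x hx
  obtain ⟨t, ht, rfl⟩ := List.mem_map.mp hx
  exact hl t ht

/-- The weight as an extended nonneg real. -/
noncomputable def w (t : PlaneTree) : ENNReal := ENNReal.ofReal t.weight

theorem ofReal_prod (l : List PlaneTree) :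
    ENNReal.ofReal ((l.map weight).prod) = (l.map w).prod := by
  induction l with
  | nil => simp
  | cons a l ih =>
    simp only [List.map_cons, List.prod_cons]
    rw [ENNReal.ofReal_mul (weight_nonneg a), ih]
    rfl

theorem w_node (l : List PlaneTree) :
    w (node l) = ((l.length).factorial : ENNReal)⁻¹ * (l.map w).prod := by
  rw [w, weight_node, ENNReal.ofReal_mul (by positivity), ofReal_prod]
  congr 1
  rw [ENNReal.ofReal_inv_of_pos (by positivity), ENNReal.ofReal_natCast]

end PlaneTree

open PlaneTree

noncomputable def FF (n : ℕ) : ENNReal :=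
  ∑' t : PlaneTree, if t.edges = n then w t else 0

noncomputable def GG (k m : ℕ) : ENNReal :=
  ∑' v : Fin k → PlaneTree, if (∑ i, (v i).edges) = m then ∏ i, w (v i) else 0

theorem FF_subtype (n : ℕ) : FF n = ∑' t : {T : PlaneTree // T.edges = n}, w t.1 := by
  rw [FF, ← Equiv.tsum_eq (Equiv.sigmaFiberEquiv edges)
    (fun t => if t.edges = n then w t else 0)]
  rw [ENNReal.tsum_sigma']
  have h1 : ∀ j : ℕ, ∑' t : {T : PlaneTree // T.edges = j},
      (if ((Equiv.sigmaFiberEquiv edges) ⟨j, t⟩).edges = n then w ((Equiv.sigmaFiberEquiv edges) ⟨j, t⟩) else 0)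
      = if j = n then ∑' t : {T : PlaneTree // T.edges = n}, w t.1 else 0 := by
    intro j
    by_cases hj : j = n
    · subst hj
      rw [if_pos rfl]
      exact tsum_congr fun t => if_pos t.2
    · rw [if_neg hj]
      refine (tsum_congr fun t => ?_).trans tsum_zero
      exact if_neg (fun hc => hj (by rw [← t.2]; exact hc))
  rw [tsum_congr h1, tsum_ite_eq]

def listEquiv : List PlaneTree ≃ PlaneTree :=
  ⟨node, fun t => match t with | node l => l, fun l => rfl, fun t => by cases t; rfl⟩

theorem GG_shift (k a m : ℕ) :
    ∑' v : Fin k → PlaneTree, (if a + (∑ i, (v i).edges) = m then (∏ i, w (v i)) else 0)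
      = if a ≤ m then GG k (m-a) else 0 := by
  by_cases ha : a ≤ m
  · rw [if_pos ha, GG]
    refine tsum_congr fun v => ?_
    exact if_congr ⟨fun h => by omega, fun h => by omega⟩ rfl rfl
  · rw [if_neg ha]
    exact (tsum_congr fun v => if_neg (by omega)).trans tsum_zero

theorem FF_rec (n : ℕ) :
    FF n = ∑ k ∈ range (n+1), ((k.factorial : ENNReal))⁻¹ * GG k (n - k) := by
  rw [FF, ← Equiv.tsum_eq listEquiv (fun t => if t.edges = n then w t else 0)]
  have h2 : ∀ l : List PlaneTree,
      (if (listEquiv l).edges = n then w (listEquiv l) else 0)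
      = if l.length + (l.map edges).sum = n
          then ((l.length.factorial : ENNReal))⁻¹ * (l.map w).prod else 0 := by
    intro l
    rw [show listEquiv l = node l from rfl, edges_node, w_node]
  rw [tsum_congr h2]
  rw [← Equiv.tsum_eq (List.equivSigmaTuple (α := PlaneTree)).symm]
  rw [ENNReal.tsum_sigma']
  have h3 : ∀ (k : ℕ) (v : Fin k → PlaneTree),
      (fun l : List PlaneTree => if l.length + (l.map edges).sum = n
          then ((l.length.factorial : ENNReal))⁻¹ * (l.map w).prod else 0)
        ((List.equivSigmaTuple (α := PlaneTree)).symm ⟨k, v⟩)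
      = (k.factorial : ENNReal)⁻¹
          * (if k + (∑ i, (v i).edges) = n then (∏ i, w (v i)) else 0) := by
    intro k v
    show (if (List.ofFn v).length + ((List.ofFn v).map edges).sum = n
        then (((List.ofFn v).length.factorial : ENNReal))⁻¹ * ((List.ofFn v).map w).prod else 0) = _
    rw [List.length_ofFn, List.map_ofFn, List.map_ofFn, List.sum_ofFn, List.prod_ofFn]
    simp only [Function.comp]
    split <;> simp
  rw [tsum_congr (fun k => tsum_congr (fun v => h3 k v))]
  have h4 : ∀ k : ℕ, ∑' v : Fin k → PlaneTree, ((k.factorial : ENNReal)⁻¹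
        * (if k + (∑ i, (v i).edges) = n then (∏ i, w (v i)) else 0))
      = (k.factorial : ENNReal)⁻¹ * (if k ≤ n then GG k (n-k) else 0) := by
    intro k
    rw [ENNReal.tsum_mul_left, GG_shift]
  rw [tsum_congr h4]
  rw [tsum_eq_sum (s := range (n+1)) (fun k hk => by
    rw [if_neg (by simp at hk; omega), mul_zero])]
  exact Finset.sum_congr rfl fun k hk => by rw [if_pos (by simp at hk; omega)]

theorem GG_zero (m : ℕ) : GG 0 m = if m = 0 then 1 else 0 := by
  rw [GG]
  rw [tsum_eq_single (fun i => i.elim0)]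
  · simp [eq_comm]
  · intro b hb
    exact absurd (Subsingleton.elim b _) hb

theorem GG_succ (k m : ℕ) :
    GG (k+1) m = ∑ j ∈ range (m+1), FF j * GG k (m - j) := by
  rw [GG, ← Equiv.tsum_eq (Fin.consEquiv (fun _ : Fin (k+1) => PlaneTree))]
  rw [ENNReal.tsum_prod']
  have h1 : ∀ (t : PlaneTree) (v : Fin k → PlaneTree),
      (fun u : Fin (k+1) → PlaneTree =>
        if (∑ i, (u i).edges) = m then ∏ i, w (u i) else 0)
        ((Fin.consEquiv (fun _ : Fin (k+1) => PlaneTree)) (t, v))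
      = w t * (if t.edges + (∑ i, (v i).edges) = m then (∏ i, w (v i)) else 0) := by
    intro t v
    show (if (∑ i, ((Fin.cons t v : Fin (k+1) → PlaneTree) i).edges) = m
        then ∏ i, w ((Fin.cons t v : Fin (k+1) → PlaneTree) i) else 0) = _
    have hs : (∑ i, ((Fin.cons t v : Fin (k+1) → PlaneTree) i).edges)
        = t.edges + ∑ i, (v i).edges := by
      rw [show (fun i => ((Fin.cons t v : Fin (k+1) → PlaneTree) i).edges)
        = (Fin.cons t.edges (fun i => (v i).edges) : Fin (k+1) → ℕ) from
          funext (Fin.cases rfl (fun i => rfl)), Fin.sum_cons]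
    have hp : (∏ i, w ((Fin.cons t v : Fin (k+1) → PlaneTree) i))
        = w t * ∏ i, w (v i) := by
      rw [show (fun i => w ((Fin.cons t v : Fin (k+1) → PlaneTree) i))
        = (Fin.cons (w t) (fun i => w (v i)) : Fin (k+1) → ENNReal) from
          funext (Fin.cases rfl (fun i => rfl)), Fin.prod_cons]
    rw [hs, hp]
    split <;> simp
  rw [tsum_congr (fun t => tsum_congr (fun v => h1 t v))]
  have h2 : ∀ t : PlaneTree,
      ∑' v : Fin k → PlaneTree,
        (w t * (if t.edges + (∑ i, (v i).edges) = m then (∏ i, w (v i)) else 0))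
      = w t * (if t.edges ≤ m then GG k (m - t.edges) else 0) := by
    intro t
    rw [ENNReal.tsum_mul_left, GG_shift]
  rw [tsum_congr h2]
  rw [← Equiv.tsum_eq (Equiv.sigmaFiberEquiv edges)
    (fun t => w t * (if t.edges ≤ m then GG k (m - t.edges) else 0))]
  rw [ENNReal.tsum_sigma']
  have h3 : ∀ j : ℕ, ∑' t : {T : PlaneTree // T.edges = j},
      ((fun t : PlaneTree => w t * (if t.edges ≤ m then GG k (m - t.edges) else 0))
        ((Equiv.sigmaFiberEquiv edges) ⟨j, t⟩))
      = FF j * (if j ≤ m then GG k (m - j) else 0) := by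
    intro j
    have : ∀ t : {T : PlaneTree // T.edges = j},
        ((fun t : PlaneTree => w t * (if t.edges ≤ m then GG k (m - t.edges) else 0))
          ((Equiv.sigmaFiberEquiv edges) ⟨j, t⟩))
        = w t.1 * (if j ≤ m then GG k (m - j) else 0) := by
      intro t
      show w t.1 * (if t.1.edges ≤ m then GG k (m - t.1.edges) else 0) = _
      rw [t.2]
    rw [tsum_congr this, ENNReal.tsum_mul_right, FF_subtype]
  rw [tsum_congr h3]
  rw [tsum_eq_sum (s := range (m+1)) (fun j hj => by
    rw [if_neg (by simp at hj; omega), mul_zero])]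
  exact Finset.sum_congr rfl fun j hj => by rw [if_pos (by simp at hj; omega)]

theorem FF_eq (n : ℕ) : FF n = ENNReal.ofReal (aw n) := by
  induction n using Nat.strong_induction_on with
  | _ n ih =>
    have hGG : ∀ k m, 1 ≤ k → (∀ j, j ≤ m → FF j = ENNReal.ofReal (aw j)) →
        GG k m = ENNReal.ofReal (sw k m) := by
      intro k
      induction k with
      | zero => intro m h; omega
      | succ k ihk =>
        intro m _ hF
        rw [GG_succ, sw_succ]
        rw [ENNReal.ofReal_sum_of_nonneg (fun j _ => mul_nonneg (aw_nonneg j) (sw_nonneg k (m-j)))]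
        refine Finset.sum_congr rfl fun j hj => ?_
        simp only [mem_range] at hj
        have hG : GG k (m-j) = ENNReal.ofReal (sw k (m-j)) := by
          match k with
          | 0 => rw [GG_zero, sw_zero]; split <;> simp
          | k+1 => exact ihk (m-j) (by omega) (fun j' hj' => hF j' (by omega))
        rw [hF j (by omega), hG, ← ENNReal.ofReal_mul (aw_nonneg j)]
    rw [FF_rec]
    have h5 : ∀ k ∈ range (n+1), ((k.factorial : ENNReal))⁻¹ * GG k (n - k)
        = ENNReal.ofReal ((k.factorial : ℝ)⁻¹ * sw k (n - k)) := by
      intro k hk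
      simp only [mem_range] at hk
      have hG : GG k (n-k) = ENNReal.ofReal (sw k (n-k)) := by
        match k with
        | 0 => rw [GG_zero, sw_zero]; split <;> simp
        | k+1 =>
          refine hGG (k+1) (n-(k+1)) (by omega) (fun j hj => ih j (by omega))
      rw [hG, ← ENNReal.ofReal_natCast k.factorial,
        ← ENNReal.ofReal_inv_of_pos (by positivity),
        ← ENNReal.ofReal_mul (by positivity)]
    rw [Finset.sum_congr rfl h5,
      ← ENNReal.ofReal_sum_of_nonneg (fun k _ => mul_nonneg (by positivity) (sw_nonneg _ _)),
      ← aw_eq]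

theorem final (n : ℕ) :
    ∑' T : {T : PlaneTree // T.edges = n}, (T : PlaneTree).weight = aw n := by
  have h1 : ∑' t : {T : PlaneTree // T.edges = n}, w t.1 = ENNReal.ofReal (aw n) := by
    rw [← FF_subtype, FF_eq]
  have h2 := ENNReal.tsum_toReal_eq
    (f := fun t : {T : PlaneTree // T.edges = n} => w t.1) (fun a => ENNReal.ofReal_ne_top)
  rw [h1, ENNReal.toReal_ofReal (aw_nonneg n)] at h2
  rw [h2]
  exact tsum_congr fun t => (ENNReal.toReal_ofReal (weight_nonneg t.1)).symm

/-- For every `n ≥ 0`, the sum over rooted plane trees `T` with exactly `n` edges of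
`∏_{i ∈ T} 1/ξ_i!` (where `ξ_i` is the number of children of vertex `i`) equals
`(n+1)^{n-1}/n!`. -/
theorem sum_plane_tree_weights (n : ℕ) :
    ∑' T : {T : PlaneTree // T.edges = n}, (T : PlaneTree).weight
      = (n + 1 : ℝ) ^ (n - 1) / (n.factorial : ℝ) := by
  rw [final n]
  rfl
end
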